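/- arXiv:1402.6471 — 5 statements merged into one kernel-verified Lean document; each statement's English description precedes it below -/
import Mathlib

section
/- Let X, B, Y be Banach spaces such that X embeds compactly into B and B embeds continuously into Y. Let T > 0, let 1 ≤ p < ∞ and r ≥ 1. Let F be a family of functions u : [0,T] → X that is bounded in L^p(0,T;X), and suppose that each u ∈ F admits a function g_u ∈ L^r(0,T;Y) with u(t) = u(0) + ∫_0^t g_u(s) ds in Y for all t ∈ [0,T], the family {g_u : u ∈ F} being bounded in L^r(0,T;Y). Then F is relatively compact in L^p(0,T;B). -/
open MeasureTheory Filter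
open scoped ENNReal NNReal
open Set Finset

set_option maxHeartbeats 1000000

lemma AL_iUnion (a : ℕ → ℝ) (ha : Monotone a) :
    ∀ n : ℕ, (⋃ k ∈ Finset.range n, Set.Ioc (a k) (a (k+1))) = Set.Ioc (a 0) (a n) := by
  intro n
  induction n with
  | zero => simp
  | succ m ih =>
    rw [Finset.range_add_one]
    rw [Finset.set_biUnion_insert, ih, Set.union_comm,
      Set.Ioc_union_Ioc_eq_Ioc (ha (Nat.zero_le m)) (ha (Nat.le_succ m))]

lemma AL_disj (a : ℕ → ℝ) (ha : Monotone a) (n : ℕ) :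
    Set.PairwiseDisjoint ↑(Finset.range n) (fun k => Set.Ioc (a k) (a (k+1))) := by
  intro i _ j _ hij
  rcases lt_or_gt_of_ne hij with h | h
  · exact Set.Ioc_disjoint_Ioc.2
      (le_trans (min_le_left _ _) (le_max_of_le_right (ha (Nat.succ_le_of_lt h))))
  · exact Set.Ioc_disjoint_Ioc.2
      (le_trans (min_le_right _ _) (le_max_of_le_left (ha (Nat.succ_le_of_lt h))))

lemma AL_sum_rpow {ι : Type*} (s : Finset ι) (f : ι → ℝ≥0∞) {q : ℝ} (hq : 1 ≤ q) :
    ∑ k ∈ s, f k ^ q ≤ (∑ k ∈ s, f k) ^ q := by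
  classical
  induction s using Finset.induction with
  | empty => simp [ENNReal.zero_rpow_of_pos (lt_of_lt_of_le one_pos hq)]
  | insert _ _ hx ih =>
    rw [Finset.sum_insert hx, Finset.sum_insert hx]
    calc _ ≤ _ + (∑ k ∈ _, f k) ^ q := add_le_add_right ih _
      _ ≤ _ := ENNReal.add_rpow_le_rpow_add _ _ hq

lemma AL_step_bound {E : Type*} [NormedAddCommGroup E] {n : ℕ} (a : ℕ → ℝ) (ha : Monotone a)
    (f : ℝ → E) (G : ℕ → ℝ≥0∞) {q : ℝ} (hq : 0 < q)
    (hf : ∀ k ∈ Finset.range n, ∀ t ∈ Set.Ioc (a k) (a (k+1)), (‖f t‖₊ : ℝ≥0∞) ≤ G k) :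
    ∫⁻ t in Set.Ioc (a 0) (a n), (‖f t‖₊ : ℝ≥0∞) ^ q ∂volume
      ≤ ∑ k ∈ Finset.range n, G k ^ q * volume (Set.Ioc (a k) (a (k+1))) := by
  rw [← AL_iUnion a ha n, lintegral_biUnion_finset (AL_disj a ha n)
    (fun k _ => measurableSet_Ioc)]
  apply Finset.sum_le_sum
  intro k hk
  calc ∫⁻ t in Set.Ioc (a k) (a (k+1)), (‖f t‖₊ : ℝ≥0∞) ^ q ∂volume
      ≤ ∫⁻ _ in Set.Ioc (a k) (a (k+1)), G k ^ q ∂volume := by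
        apply setLIntegral_mono measurable_const
        intro t ht
        exact ENNReal.rpow_le_rpow (hf k hk t ht) hq.le
    _ = G k ^ q * volume (Set.Ioc (a k) (a (k+1))) := setLIntegral_const _ _

lemma AL_avg_bound {X : Type*} [NormedAddCommGroup X] [NormedSpace ℝ X] {n : ℕ}
    (a : ℕ → ℝ) (ha : Monotone a) (u : ℝ → X) {p : ℝ≥0∞} (hp : 1 ≤ p) (hp_top : p ≠ ∞)
    (hu : AEStronglyMeasurable u (volume.restrict (Set.Ioc (a 0) (a n))))
    (hV : ∀ k ∈ Finset.range n, volume (Set.Ioc (a k) (a (k+1))) ≠ 0) :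
    ∑ k ∈ Finset.range n,
      (‖(volume (Set.Ioc (a k) (a (k+1)))).toReal⁻¹ •
          ∫ t in Set.Ioc (a k) (a (k+1)), u t‖₊ : ℝ≥0∞) ^ p.toReal
        * volume (Set.Ioc (a k) (a (k+1)))
      ≤ ∫⁻ t in Set.Ioc (a 0) (a n), (‖u t‖₊ : ℝ≥0∞) ^ p.toReal ∂volume := by
  have hq : 0 < p.toReal := ENNReal.toReal_pos (lt_of_lt_of_le one_pos hp).ne' hp_top
  rw [← AL_iUnion a ha n, lintegral_biUnion_finset (AL_disj a ha n)
    (fun k _ => measurableSet_Ioc)]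
  apply Finset.sum_le_sum
  intro k hk
  set I := Set.Ioc (a k) (a (k+1)) with hI
  set V : ℝ≥0∞ := volume I with hVdef
  have hV0 : V ≠ 0 := hV k hk
  have hVtop : V ≠ ∞ := (measure_Ioc_lt_top).ne
  have hsub : I ⊆ Set.Ioc (a 0) (a n) := by
    rw [← AL_iUnion a ha n]
    exact Set.subset_biUnion_of_mem (u := fun k => Set.Ioc (a k) (a (k+1))) hk
  have huk : AEStronglyMeasurable u (volume.restrict I) :=
    hu.mono_measure (Measure.restrict_mono hsub le_rfl)
  set E : ℝ≥0∞ := eLpNorm u p (volume.restrict I) with hE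
  -- norm of average
  have h1 : (‖V.toReal⁻¹ • ∫ t in I, u t‖₊ : ℝ≥0∞) ≤ V⁻¹ * ∫⁻ t in I, (‖u t‖₊ : ℝ≥0∞) ∂volume := by
    rw [nnnorm_smul]
    push_cast
    have : (‖V.toReal⁻¹‖₊ : ℝ≥0∞) = V⁻¹ := by
      rw [← ENNReal.ofReal_coe_nnreal, coe_nnnorm, Real.norm_eq_abs,
        abs_of_nonneg (by positivity), ENNReal.ofReal_inv_of_pos
          (ENNReal.toReal_pos hV0 hVtop), ENNReal.ofReal_toReal hVtop]
    rw [this]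
    exact mul_le_mul_right (enorm_integral_le_lintegral_enorm _) _
  -- Hölder
  have h2 : ∫⁻ t in I, (‖u t‖₊ : ℝ≥0∞) ∂volume ≤ E * V ^ (1 - 1/p.toReal) := by
    have := eLpNorm_le_eLpNorm_mul_rpow_measure_univ (μ := volume.restrict I) hp huk
    rw [eLpNorm_one_eq_lintegral_enorm, Measure.restrict_apply_univ] at this
    simp at this ⊢; exact this
  have hE_eq : E ^ p.toReal = ∫⁻ t in I, (‖u t‖₊ : ℝ≥0∞) ^ p.toReal ∂volume := by
    rw [hE, eLpNorm_eq_lintegral_rpow_enorm_toReal (lt_of_lt_of_le one_pos hp).ne' hp_top,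
      ← ENNReal.rpow_mul, one_div, inv_mul_cancel₀ hq.ne', ENNReal.rpow_one]; rfl
  calc (‖V.toReal⁻¹ • ∫ t in I, u t‖₊ : ℝ≥0∞) ^ p.toReal * V
      ≤ (V⁻¹ * (E * V ^ (1 - 1/p.toReal))) ^ p.toReal * V := by
        gcongr
        exact h1.trans (by gcongr)
    _ = E ^ p.toReal * (V⁻¹ ^ p.toReal * (V ^ (1 - 1/p.toReal)) ^ p.toReal * V) := by
        rw [ENNReal.mul_rpow_of_nonneg _ _ hq.le, ENNReal.mul_rpow_of_nonneg _ _ hq.le]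
        ring
    _ = E ^ p.toReal := by
        nth_rewrite 3 [← ENNReal.rpow_one V]
        rw [ENNReal.inv_rpow, ← ENNReal.rpow_neg, ← ENNReal.rpow_mul,
          ← ENNReal.rpow_add _ _ hV0 hVtop, ← ENNReal.rpow_add _ _ hV0 hVtop]
        have heq : -p.toReal + (1 - 1/p.toReal) * p.toReal + 1 = 0 := by
          field_simp
          ring
        rw [heq, ENNReal.rpow_zero, mul_one]
    _ = ∫⁻ t in I, (‖u t‖₊ : ℝ≥0∞) ^ p.toReal ∂volume := hE_eq

lemma AL_osc {Y : Type*} [NormedAddCommGroup Y] [NormedSpace ℝ Y] [CompleteSpace Y]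
    (w : ℝ → Y) (gw : ℝ → Y) (T : ℝ)
    (hg_int : IntegrableOn gw (Set.Ioc 0 T) volume)
    (hw : ∀ t ∈ Set.Icc (0:ℝ) T, w t = w 0 + ∫ s in Set.Ioc (0:ℝ) t, gw s)
    {α β : ℝ} (h0α : 0 ≤ α) (hβT : β ≤ T)
    {t s : ℝ} (ht : t ∈ Set.Ioc α β) (hs : s ∈ Set.Ioc α β) :
    ‖w t - w s‖ ≤ ∫ x in Set.Ioc α β, ‖gw x‖ := by
  have hmem : ∀ x ∈ Set.Ioc α β, x ∈ Set.Icc (0:ℝ) T := fun x hx =>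
    ⟨le_trans h0α hx.1.le, le_trans hx.2 hβT⟩
  have hnorm_int : IntegrableOn (fun x => ‖gw x‖) (Set.Ioc α β) volume :=
    MeasureTheory.IntegrableOn.mono_set hg_int.norm
      (fun x hx => ⟨lt_of_le_of_lt h0α hx.1, le_trans hx.2 hβT⟩)
  -- key: for s ≤ t both in Ioc α β
  have key : ∀ s' t' : ℝ, s' ∈ Set.Ioc α β → t' ∈ Set.Ioc α β → s' ≤ t' →
      ‖w t' - w s'‖ ≤ ∫ x in Set.Ioc α β, ‖gw x‖ := by
    intro s' t' hs' ht' hst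
    have h0s : (0:ℝ) ≤ s' := le_trans h0α hs'.1.le
    have hsplit : Set.Ioc (0:ℝ) s' ∪ Set.Ioc s' t' = Set.Ioc (0:ℝ) t' :=
      Set.Ioc_union_Ioc_eq_Ioc h0s hst
    have hint1 : IntegrableOn gw (Set.Ioc (0:ℝ) s') volume :=
      hg_int.mono_set (Set.Ioc_subset_Ioc le_rfl (le_trans hs'.2 hβT))
    have hint2 : IntegrableOn gw (Set.Ioc s' t') volume :=
      hg_int.mono_set (fun x hx => ⟨lt_of_le_of_lt h0s hx.1, le_trans hx.2 (le_trans ht'.2 hβT)⟩)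
    have hdiff : w t' - w s' = ∫ x in Set.Ioc s' t', gw x := by
      rw [hw t' (hmem t' ht'), hw s' (hmem s' hs'), ← hsplit,
        setIntegral_union (Set.Ioc_disjoint_Ioc_of_le le_rfl) measurableSet_Ioc hint1 hint2]
      abel
    rw [hdiff]
    calc ‖∫ x in Set.Ioc s' t', gw x‖ ≤ ∫ x in Set.Ioc s' t', ‖gw x‖ :=
          norm_integral_le_integral_norm _
      _ ≤ ∫ x in Set.Ioc α β, ‖gw x‖ := by
          apply setIntegral_mono_set hnorm_int
            (Eventually.of_forall fun x => norm_nonneg _)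
          exact HasSubset.Subset.eventuallyLE
            (fun x hx => ⟨lt_of_lt_of_le hs'.1 hx.1.le, le_trans hx.2 ht'.2⟩)
  rcases le_total s t with h | h
  · exact key s t hs ht h
  · rw [norm_sub_rev]
    exact key t s ht hs h

lemma AL_avg_point {Y : Type*} [NormedAddCommGroup Y] [NormedSpace ℝ Y] [CompleteSpace Y]
    (w : ℝ → Y) {I : Set ℝ} (hImeas : MeasurableSet I)
    (hIfin : volume I ≠ ∞) (hIpos : volume I ≠ 0)
    (hw_int : IntegrableOn w I volume) {G : ℝ}
    (hosc : ∀ t ∈ I, ∀ s ∈ I, ‖w t - w s‖ ≤ G)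
    {t : ℝ} (ht : t ∈ I) :
    ‖w t - (volume I).toReal⁻¹ • ∫ s in I, w s‖ ≤ G := by
  set V : ℝ := (volume I).toReal with hV
  have hVpos : 0 < V := ENNReal.toReal_pos hIpos hIfin
  have hconst : IntegrableOn (fun _ : ℝ => w t) I volume :=
    integrableOn_const hIfin
  have heq : w t - V⁻¹ • ∫ s in I, w s = V⁻¹ • ∫ s in I, (w t - w s) := by
    rw [integral_sub hconst hw_int, setIntegral_const, smul_sub, smul_smul,
      measureReal_def, ← hV, inv_mul_cancel₀ hVpos.ne', one_smul]
  rw [heq, norm_smul, norm_inv, Real.norm_eq_abs, abs_of_pos hVpos]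
  have hbound : ‖∫ s in I, (w t - w s)‖ ≤ G * V :=
    norm_setIntegral_le_of_norm_le_const hIfin.lt_top (fun s hs => hosc t ht s hs)
  calc V⁻¹ * ‖∫ s in I, (w t - w s)‖ ≤ V⁻¹ * (G * V) := by
        apply mul_le_mul_of_nonneg_left hbound (by positivity)
    _ = G := by field_simp

lemma AL_indicatorConstLp_cont {α E : Type*} {m : MeasurableSpace α} {μ : Measure α}
    [NormedAddCommGroup E] (p : ℝ≥0∞) [Fact (1 ≤ p)] {s : Set α} (hs : MeasurableSet s) (hμs : μ s ≠ ∞) :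
    Continuous (fun c : E => indicatorConstLp p hs hμs c) := by
  apply (LipschitzWith.of_dist_le_mul (K := ((μ s).toReal ^ (1 / p.toReal)).toNNReal)
    (fun c d => ?_)).continuous
  rw [dist_eq_norm, indicatorConstLp_sub, dist_eq_norm]
  calc ‖indicatorConstLp p hs hμs (c - d)‖ ≤ ‖c - d‖ * (μ s).toReal ^ (1 / p.toReal) :=
        norm_indicatorConstLp_le
    _ = ((μ s).toReal ^ (1 / p.toReal)).toNNReal * ‖c - d‖ := by
        rw [Real.coe_toNNReal _ (by positivity)]; ring

lemma AL_Phi_coe {α E : Type*} {m : MeasurableSpace α} {μ : Measure α}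
    [NormedAddCommGroup E] (p : ℝ≥0∞) (n : ℕ) (Iset : ℕ → Set α)
    (hmeas : ∀ k, MeasurableSet (Iset k)) (hfin : ∀ k, μ (Iset k) ≠ ∞) (b : ℕ → E) :
    ⇑(∑ k ∈ Finset.range n, indicatorConstLp p (hmeas k) (hfin k) (b k)) =ᵐ[μ]
      fun t => ∑ k ∈ Finset.range n, (Iset k).indicator (fun _ => b k) t := by
  induction n with
  | zero => simp only [Finset.range_zero, Finset.sum_empty]; exact Lp.coeFn_zero E p μ
  | succ m ih =>
    rw [Finset.range_add_one, Finset.sum_insert (by simp)]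
    filter_upwards [Lp.coeFn_add (indicatorConstLp p (hmeas m) (hfin m) (b m))
      (∑ k ∈ Finset.range m, indicatorConstLp p (hmeas k) (hfin k) (b k)),
      indicatorConstLp_coeFn (p := p) (hs := hmeas m) (hμs := hfin m) (c := b m), ih] with t h1 h2 h3
    rw [h1, Pi.add_apply, h2, h3, Finset.sum_insert (by simp)]


theorem ehrling_aux
    {X B Y : Type*}
    [NormedAddCommGroup X] [NormedSpace ℝ X]
    [NormedAddCommGroup B] [NormedSpace ℝ B]
    [NormedAddCommGroup Y] [NormedSpace ℝ Y]
    (jXB : X →L[ℝ] B)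
    (hjXB_cpt : ∀ s : Set X, Bornology.IsBounded s → IsCompact (closure (jXB '' s)))
    (jBY : B →L[ℝ] Y) (hjBY_inj : Function.Injective jBY)
    {η : ℝ} (hη : 0 < η) :
    ∃ M : ℝ, 0 ≤ M ∧ ∀ x : X, ‖jXB x‖ ≤ η * ‖x‖ + M * ‖jBY (jXB x)‖ := by
  by_contra h
  push_neg at h
  have key : ∀ n : ℕ, ∃ x : X, η * ‖x‖ + (n : ℝ) * ‖jBY (jXB x)‖ < ‖jXB x‖ := by
    intro n
    obtain ⟨x, hx⟩ := h n (Nat.cast_nonneg n)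
    exact ⟨x, hx⟩
  choose x hx using key
  have hx0 : ∀ n : ℕ, x n ≠ 0 := by
    intro n hn
    have := hx n
    simp [hn] at this
  set y : ℕ → X := fun n => ‖x n‖⁻¹ • x n with hy
  have hxpos : ∀ n : ℕ, (0:ℝ) < ‖x n‖ := fun n => norm_pos_iff.2 (hx0 n)
  have hynorm : ∀ n : ℕ, ‖y n‖ = 1 := by
    intro n
    simp [hy, norm_smul, abs_of_nonneg, inv_mul_cancel₀ (norm_ne_zero_iff.2 (hx0 n))]
  have hyineq : ∀ n : ℕ, η + (n : ℝ) * ‖jBY (jXB (y n))‖ < ‖jXB (y n)‖ := by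
    intro n
    have h1 := hx n
    have h2 : (0:ℝ) < ‖x n‖⁻¹ := inv_pos.2 (hxpos n)
    have h3 : ‖x n‖⁻¹ * (η * ‖x n‖ + (n : ℝ) * ‖jBY (jXB (x n))‖) < ‖x n‖⁻¹ * ‖jXB (x n)‖ :=
      (mul_lt_mul_iff_right₀ h2).2 h1
    calc η + (n : ℝ) * ‖jBY (jXB (y n))‖
        = ‖x n‖⁻¹ * (η * ‖x n‖ + (n : ℝ) * ‖jBY (jXB (x n))‖) := by
          have hne : ‖x n‖ ≠ 0 := (hxpos n).ne'
          simp only [hy, ContinuousLinearMap.map_smul, norm_smul, norm_inv, norm_norm]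
          field_simp
      _ < ‖x n‖⁻¹ * ‖jXB (x n)‖ := h3
      _ = ‖jXB (y n)‖ := by
          simp [hy, ContinuousLinearMap.map_smul, norm_smul]
  have hK : IsCompact (closure (jXB '' Metric.closedBall 0 1)) :=
    hjXB_cpt _ Metric.isBounded_closedBall
  have hmem : ∀ n : ℕ, jXB (y n) ∈ closure (jXB '' Metric.closedBall 0 1) := by
    intro n
    exact subset_closure ⟨y n, by simp [hynorm n], rfl⟩
  obtain ⟨b, _, φ, hφmono, hφtend⟩ := hK.tendsto_subseq hmem
  have hbd : ∀ n : ℕ, 0 < n → ‖jBY (jXB (y n))‖ ≤ ‖jXB‖ / n := by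
    intro n hn
    have h1 := hyineq n
    have h2 : ‖jXB (y n)‖ ≤ ‖jXB‖ := by
      calc ‖jXB (y n)‖ ≤ ‖jXB‖ * ‖y n‖ := jXB.le_opNorm _
        _ = ‖jXB‖ := by rw [hynorm n, mul_one]
    have h3 : (n : ℝ) * ‖jBY (jXB (y n))‖ ≤ ‖jXB‖ := by nlinarith
    have hnpos : (0:ℝ) < n := Nat.cast_pos.2 hn
    rw [le_div_iff₀ hnpos]
    linarith [h3]
  have htend0 : Tendsto (fun n => jBY (jXB (y (φ n)))) atTop (nhds 0) := by
    have hdiv : Tendsto (fun n : ℕ => ‖jXB‖ / (φ n : ℝ)) atTop (nhds 0) := by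
      apply Tendsto.div_atTop tendsto_const_nhds
      exact tendsto_natCast_atTop_atTop.comp hφmono.tendsto_atTop
    rw [tendsto_zero_iff_norm_tendsto_zero]
    apply squeeze_zero' (Eventually.of_forall fun n => norm_nonneg _) _ hdiv
    filter_upwards [eventually_ge_atTop 1] with n hn
    exact hbd _ (lt_of_lt_of_le hn (hφmono.le_apply))
  have htendb : Tendsto (fun n => jBY (jXB (y (φ n)))) atTop (nhds (jBY b)) :=
    (jBY.continuous.tendsto b).comp hφtend
  have hb0 : jBY b = 0 := tendsto_nhds_unique htendb htend0
  have hbzero : b = 0 := hjBY_inj (by simp [hb0])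
  have hnormtend : Tendsto (fun n => ‖jXB (y (φ n))‖) atTop (nhds 0) := by
    have : Tendsto (fun n => ‖(fun n => jXB (y n)) (φ n)‖) atTop (nhds ‖b‖) :=
      (continuous_norm.tendsto b).comp hφtend
    rwa [hbzero, norm_zero] at this
  have hge : ∀ n : ℕ, η ≤ ‖jXB (y (φ n))‖ := by
    intro n
    have h1 := hyineq (φ n)
    nlinarith [mul_nonneg (Nat.cast_nonneg (φ n) : (0:ℝ) ≤ (φ n : ℝ))
      (norm_nonneg (jBY (jXB (y (φ n)))))]
  have : η ≤ 0 := le_of_tendsto_of_tendsto' tendsto_const_nhds hnormtend hge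
  linarith

lemma AL_smul_norm {α E : Type*} {m : MeasurableSpace α} {μ : Measure α}
    [NormedAddCommGroup E] (v : α → E) {cst : ℝ} (hc : 0 ≤ cst) (p : ℝ≥0∞) :
    eLpNorm (fun t => cst * ‖v t‖) p μ = ENNReal.ofReal cst * eLpNorm v p μ := by
  have h : (fun t => cst * ‖v t‖) = cst • (fun t => ‖v t‖) := by
    funext t; simp
  rw [h, eLpNorm_const_smul, eLpNorm_norm]
  congr 1
  rw [← ofReal_norm, Real.norm_eq_abs, abs_of_nonneg hc]


/-- **Aubin--Lions lemma** (Simon, Corollary 4, case `p < ∞`).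
Let `X ⊂⊂ B ⊂ Y` be Banach spaces (compact embedding `jXB`, continuous embedding `jBY`).
If `F` is a family of functions `[0,T] → X` bounded in `L^p(0,T;X)` (`1 ≤ p < ∞`) whose
time-derivatives `g u` (in the sense of primitives, valued in `Y`) are bounded in
`L^r(0,T;Y)` with `r ≥ 1`, then `F` is relatively compact in `L^p(0,T;B)`. -/
theorem aubin_lions_lp
    {X B Y : Type*}
    [NormedAddCommGroup X] [NormedSpace ℝ X] [CompleteSpace X]
    [NormedAddCommGroup B] [NormedSpace ℝ B] [CompleteSpace B]
    [NormedAddCommGroup Y] [NormedSpace ℝ Y] [CompleteSpace Y]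
    (jXB : X →L[ℝ] B) (hjXB_inj : Function.Injective jXB)
    (hjXB_cpt : ∀ s : Set X, Bornology.IsBounded s → IsCompact (closure (jXB '' s)))
    (jBY : B →L[ℝ] Y) (hjBY_inj : Function.Injective jBY)
    (T : ℝ) (hT : 0 < T)
    (p r : ℝ≥0∞) [Fact (1 ≤ p)] (hp_top : p ≠ ∞) (hr : 1 ≤ r)
    (F : Set (ℝ → X)) (g : (ℝ → X) → ℝ → Y) (C C' : ℝ)
    (hF_mem : ∀ u ∈ F, MemLp u p (volume.restrict (Set.Ioc (0:ℝ) T)))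
    (hF_bdd : ∀ u ∈ F, eLpNorm u p (volume.restrict (Set.Ioc (0:ℝ) T)) ≤ ENNReal.ofReal C)
    (hg_mem : ∀ u ∈ F, MemLp (g u) r (volume.restrict (Set.Ioc (0:ℝ) T)))
    (hg_bdd : ∀ u ∈ F, eLpNorm (g u) r (volume.restrict (Set.Ioc (0:ℝ) T)) ≤ ENNReal.ofReal C')
    (h_prim : ∀ u ∈ F, ∀ t ∈ Set.Icc (0:ℝ) T,
      jBY (jXB (u t)) = jBY (jXB (u 0)) + ∫ s in Set.Ioc (0:ℝ) t, g u s) :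
    IsCompact (closure
      {f : Lp B p (volume.restrict (Set.Ioc (0:ℝ) T)) |
        ∃ u ∈ F, (f : ℝ → B) =ᵐ[volume.restrict (Set.Ioc (0:ℝ) T)] fun t => jXB (u t)}) := by
  have hp1 : (1:ℝ≥0∞) ≤ p := Fact.out
  have hp0 : p ≠ 0 := (lt_of_lt_of_le one_pos hp1).ne'
  set μ : Measure ℝ := volume.restrict (Set.Ioc (0:ℝ) T) with hμdef
  haveI : IsFiniteMeasure μ := by
    constructor
    rw [hμdef, Measure.restrict_apply_univ]
    exact measure_Ioc_lt_top
  have hq0 : 0 < p.toReal := ENNReal.toReal_pos hp0 hp_top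
  have hq1 : 1 ≤ p.toReal := by
    have := ENNReal.toReal_mono hp_top hp1
    simpa using this
  set q : ℝ := p.toReal with hqdef
  set L : X →L[ℝ] Y := jBY.comp jXB with hLdef
  -- reduce to totally bounded
  rw [isCompact_iff_totallyBounded_isComplete]
  refine ⟨TotallyBounded.closure ?_, isClosed_closure.isComplete⟩
  rw [Metric.totallyBounded_iff]
  intro ε hε
  -- MAIN construction
  have main : ∃ K : Set (Lp B p μ), IsCompact K ∧
      ∀ f ∈ {f : Lp B p μ | ∃ u ∈ F, (f : ℝ → B) =ᵐ[μ] fun t => jXB (u t)},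
        ∃ y ∈ K, dist f y ≤ ε/4 := by
    classical
    -- constants
    set Cm : ℝ := max C 0 with hCmdef
    have hCm0 : 0 ≤ Cm := le_max_right _ _
    have hCm : ∀ u ∈ F, eLpNorm u p μ ≤ ENNReal.ofReal Cm := fun u hu =>
      (hF_bdd u hu).trans (ENNReal.ofReal_le_ofReal (le_max_left _ _))
    have hr1R : 1 - 1/r.toReal ≥ 0 := by
      rcases eq_or_ne r ∞ with hrt | hrt
      · simp [hrt]
      · have h1 : 1 ≤ r.toReal := by
          have := ENNReal.toReal_mono hrt hr
          simpa using this
        have : 1/r.toReal ≤ 1 := by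
          rw [div_le_one (by linarith)]; linarith
        linarith
    set DE : ℝ≥0∞ := ENNReal.ofReal C' * ENNReal.ofReal T ^ (1 - 1/r.toReal) with hDEdef
    have hDE_top : DE ≠ ∞ :=
      ENNReal.mul_ne_top ENNReal.ofReal_ne_top
        (ENNReal.rpow_ne_top_of_nonneg hr1R ENNReal.ofReal_ne_top)
    set Dr : ℝ := DE.toReal with hDrdef
    have hDr0 : 0 ≤ Dr := ENNReal.toReal_nonneg
    have hDE_eq : DE = ENNReal.ofReal Dr := (ENNReal.ofReal_toReal hDE_top).symm
    have hμuniv : μ Set.univ = ENNReal.ofReal T := by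
      rw [hμdef, Measure.restrict_apply_univ, Real.volume_Ioc, sub_zero]
    have hgL1 : ∀ u ∈ F, ∫⁻ s, (‖g u s‖₊ : ℝ≥0∞) ∂μ ≤ DE := by
      intro u hu
      have h1 := eLpNorm_le_eLpNorm_mul_rpow_measure_univ (p := 1) (q := r) (μ := μ)
        (f := g u) hr (hg_mem u hu).aestronglyMeasurable
      rw [eLpNorm_one_eq_lintegral_enorm, hμuniv] at h1
      have hexp : 1/(1:ℝ≥0∞).toReal - 1/r.toReal = 1 - 1/r.toReal := by norm_num
      rw [hexp] at h1
      exact h1.trans (mul_le_mul_left (hg_bdd u hu) _)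
    -- η and Ehrling constant M
    set η : ℝ := ε / (16 * (Cm + 1)) with hηdef
    have hηpos : 0 < η := by positivity
    obtain ⟨M, hM0, hEhr⟩ := ehrling_aux jXB hjXB_cpt jBY hjBY_inj hηpos
    -- choose n
    set κ : ℝ := ε / (16 * (M + 1) * (Dr + 1)) with hκdef
    have hκpos : 0 < κ := by positivity
    obtain ⟨n, hn⟩ := exists_nat_gt (T / κ ^ q)
    have hTκq : 0 < T / κ ^ q := by positivity
    have hnpos : 0 < n := by
      by_contra h
      push_neg at h
      interval_cases n
      · simp at hn; linarith
    have hn0 : (n:ℝ) ≠ 0 := Nat.cast_ne_zero.2 hnpos.ne'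
    have hnR : (0:ℝ) < n := Nat.cast_pos.2 hnpos
    have hTn_pos : 0 < T / n := by positivity
    have hTn_le : T / n ≤ κ ^ q := by
      rw [div_le_iff₀ hnR]
      have h := (div_lt_iff₀ (show (0:ℝ) < κ ^ q by positivity)).1 hn
      nlinarith [h]
    -- partition
    set a : ℕ → ℝ := fun k => k * (T/n) with hadef
    have hamono : Monotone a := by
      intro i j hij
      simp only [hadef]
      apply mul_le_mul_of_nonneg_right (Nat.cast_le.2 hij) hTn_pos.le
    have ha0 : a 0 = 0 := by simp [hadef]
    have han : a n = T := by
      simp only [hadef]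
      field_simp
    have haT : ∀ k, k ≤ n → a k ≤ T := fun k hk => han ▸ hamono hk
    have ha_nonneg : ∀ k, 0 ≤ a k := fun k => by
      simp only [hadef]; positivity
    have hIvol : ∀ k : ℕ, volume (Set.Ioc (a k) (a (k+1))) = ENNReal.ofReal (T/n) := by
      intro k
      rw [Real.volume_Ioc]
      congr 1
      simp only [hadef]
      push_cast
      ring
    set V : ℝ≥0∞ := ENNReal.ofReal (T/n) with hVdef
    have hV0 : V ≠ 0 := by
      simp only [hVdef, ne_eq, ENNReal.ofReal_eq_zero, not_le]
      exact hTn_pos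
    have hVtop : V ≠ ∞ := ENNReal.ofReal_ne_top
    have hIsub : ∀ k ∈ Finset.range n, Set.Ioc (a k) (a (k+1)) ⊆ Set.Ioc 0 T := by
      intro k hk x hx
      exact ⟨lt_of_le_of_lt (ha_nonneg k) hx.1,
        hx.2.trans (haT (k+1) (Finset.mem_range.1 hk))⟩
    have hVκ : V ^ (1/q) ≤ ENNReal.ofReal κ := by
      rw [hVdef, ENNReal.ofReal_rpow_of_pos hTn_pos]
      apply ENNReal.ofReal_le_ofReal
      calc (T/n) ^ (1/q) ≤ (κ ^ q) ^ (1/q) :=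
            Real.rpow_le_rpow hTn_pos.le hTn_le (by positivity)
        _ = κ := by
            rw [← Real.rpow_mul hκpos.le, mul_one_div_cancel hq0.ne', Real.rpow_one]
    -- average values and radius
    have h1q : 0 ≤ 1 - 1/q := by
      have h : 1/q ≤ 1 := by rw [div_le_one hq0]; exact hq1
      linarith
    set c : (ℝ → X) → ℕ → X := fun u k =>
      (volume (Set.Ioc (a k) (a (k+1)))).toReal⁻¹ • ∫ t in Set.Ioc (a k) (a (k+1)), u t
      with hcdef
    set RE : ℝ≥0∞ := V⁻¹ * (ENNReal.ofReal Cm * V ^ (1 - 1/q)) with hREdef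
    have hRE_top : RE ≠ ∞ :=
      ENNReal.mul_ne_top (ENNReal.inv_ne_top.2 hV0)
        (ENNReal.mul_ne_top ENNReal.ofReal_ne_top
          (ENNReal.rpow_ne_top_of_nonneg h1q hVtop))
    set R : ℝ := RE.toReal with hRdef
    have hR0 : 0 ≤ R := ENNReal.toReal_nonneg
    have hcR : ∀ u ∈ F, ∀ k ∈ Finset.range n, ‖c u k‖ ≤ R := by
      intro u hu k hk
      have hVIk : volume (Set.Ioc (a k) (a (k+1))) = V := hIvol k
      have husm : AEStronglyMeasurable u μ := (hF_mem u hu).aestronglyMeasurable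
      have hrle : volume.restrict (Set.Ioc (a k) (a (k+1))) ≤ μ := by
        rw [hμdef]
        exact Measure.restrict_mono (hIsub k hk) le_rfl
      have huk : AEStronglyMeasurable u (volume.restrict (Set.Ioc (a k) (a (k+1)))) :=
        husm.mono_measure hrle
      have h1 : (‖c u k‖₊ : ℝ≥0∞)
          ≤ V⁻¹ * ∫⁻ t in Set.Ioc (a k) (a (k+1)), (‖u t‖₊ : ℝ≥0∞) ∂volume := by
        rw [hcdef]
        simp only
        rw [nnnorm_smul]
        push_cast
        have hcoef : ((‖(volume (Set.Ioc (a k) (a (k+1)))).toReal⁻¹‖₊ : ℝ≥0) : ℝ≥0∞)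
            = V⁻¹ := by
          rw [← ENNReal.ofReal_coe_nnreal, coe_nnnorm, Real.norm_eq_abs, abs_of_nonneg (by positivity),
            hVIk, ENNReal.ofReal_inv_of_pos (ENNReal.toReal_pos hV0 hVtop),
            ENNReal.ofReal_toReal hVtop]
        rw [hcoef]
        exact mul_le_mul_right (enorm_integral_le_lintegral_enorm _) _
      have h2 : ∫⁻ t in Set.Ioc (a k) (a (k+1)), (‖u t‖₊ : ℝ≥0∞) ∂volume
          ≤ ENNReal.ofReal Cm * V ^ (1 - 1/q) := by
        have h3 := eLpNorm_le_eLpNorm_mul_rpow_measure_univ (p := 1) (q := p)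
          (μ := volume.restrict (Set.Ioc (a k) (a (k+1)))) (f := u) hp1 huk
        rw [eLpNorm_one_eq_lintegral_enorm, Measure.restrict_apply_univ, hVIk] at h3
        have hexp : 1/(1:ℝ≥0∞).toReal - 1/p.toReal = 1 - 1/q := by norm_num [hqdef]
        rw [hexp] at h3
        refine h3.trans ?_
        exact mul_le_mul_left ((eLpNorm_mono_measure _ hrle).trans (hCm u hu)) _
      have h5 : (‖c u k‖₊ : ℝ≥0∞) ≤ RE := by
        rw [hREdef]
        exact h1.trans (mul_le_mul_right h2 _)
      calc ‖c u k‖ = ((‖c u k‖₊ : ℝ≥0∞)).toReal := by simp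
        _ ≤ R := ENNReal.toReal_mono hRE_top h5
    -- the compact set
    set K0 : Set B := closure (jXB '' Metric.closedBall 0 R) with hK0def
    have hK0c : IsCompact K0 := hjXB_cpt _ Metric.isBounded_closedBall
    have h0K0 : (0:B) ∈ K0 :=
      subset_closure ⟨0, Metric.mem_closedBall_self hR0, map_zero jXB⟩
    set Φ : (ℕ → B) → Lp B p μ := fun b =>
      ∑ k ∈ Finset.range n, indicatorConstLp p
        (measurableSet_Ioc : MeasurableSet (Set.Ioc (a k) (a (k+1))))
        (measure_ne_top μ _) (b k) with hΦdef
    have hΦcont : Continuous Φ := by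
      apply continuous_finset_sum
      intro k _
      exact (AL_indicatorConstLp_cont (μ := μ) p
        (measurableSet_Ioc : MeasurableSet (Set.Ioc (a k) (a (k+1))))
        (measure_ne_top μ _)).comp (continuous_apply k)
    refine ⟨Φ '' (Set.univ.pi fun _ : ℕ => K0),
      (isCompact_univ_pi fun _ => hK0c).image hΦcont, ?_⟩
    rintro f ⟨u, hu, hfae⟩
    set b : ℕ → B := fun k => if k < n then jXB (c u k) else 0 with hbdef
    have hbK0 : ∀ k, b k ∈ K0 := by
      intro k
      rw [hbdef]
      by_cases h : k < n
      · simp only [if_pos h]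
        refine subset_closure ⟨c u k, ?_, rfl⟩
        rw [Metric.mem_closedBall, dist_zero_right]
        exact hcR u hu k (Finset.mem_range.2 h)
      · simp only [if_neg h]
        exact h0K0
    have hbeq : ∀ k ∈ Finset.range n, b k = jXB (c u k) := by
      intro k hk
      rw [hbdef]
      simp only [if_pos (Finset.mem_range.1 hk)]
    refine ⟨Φ b, ⟨b, fun k _ => hbK0 k, rfl⟩, ?_⟩
    -- the step function
    set stepX : ℝ → X := fun t =>
      ∑ k ∈ Finset.range n, (Set.Ioc (a k) (a (k+1))).indicator (fun _ => c u k) t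
      with hstepdef
    have hstep_eval : ∀ k ∈ Finset.range n, ∀ t ∈ Set.Ioc (a k) (a (k+1)),
        stepX t = c u k := by
      intro k hk t ht
      rw [hstepdef]
      simp only
      rw [Finset.sum_eq_single_of_mem k hk]
      · exact Set.indicator_of_mem ht _
      · intro j hj hjk
        apply Set.indicator_of_notMem
        intro hmem
        exact Set.disjoint_left.1
          (AL_disj a hamono n (Finset.mem_coe.2 hj) (Finset.mem_coe.2 hk) hjk) hmem ht
    have hstepsm : AEStronglyMeasurable stepX μ := by
      have : StronglyMeasurable stepX := by
        apply Finset.stronglyMeasurable_fun_sum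
        intro k _
        exact stronglyMeasurable_const.indicator measurableSet_Ioc
      exact this.aestronglyMeasurable
    have husm : AEStronglyMeasurable u μ := (hF_mem u hu).aestronglyMeasurable
    have hu_int : IntegrableOn u (Set.Ioc 0 T) volume := by
      have h := (hF_mem u hu).integrable hp1
      rwa [hμdef] at h
    have hu_int_Ik : ∀ k ∈ Finset.range n, IntegrableOn u (Set.Ioc (a k) (a (k+1))) volume :=
      fun k hk => hu_int.mono_set (hIsub k hk)
    have hg_int : IntegrableOn (g u) (Set.Ioc 0 T) volume := by
      have h := (hg_mem u hu).integrable hr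
      rwa [hμdef] at h
    set G : ℕ → ℝ := fun k => ∫ x in Set.Ioc (a k) (a (k+1)), ‖g u x‖ ∂volume with hGdef
    have hLw : ∀ t ∈ Set.Icc (0:ℝ) T, L (u t) = L (u 0) + ∫ s in Set.Ioc (0:ℝ) t, g u s := by
      intro t ht
      have h := h_prim u hu t ht
      rw [hLdef]
      simpa using h
    -- pointwise Y-bound
    have hYpoint : ∀ k ∈ Finset.range n, ∀ t ∈ Set.Ioc (a k) (a (k+1)),
        (‖L (u t) - L (stepX t)‖₊ : ℝ≥0∞) ≤ ENNReal.ofReal (G k) := by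
      intro k hk t ht
      rw [hstep_eval k hk t ht]
      have hLc : L (c u k) = (volume (Set.Ioc (a k) (a (k+1)))).toReal⁻¹ •
          ∫ s in Set.Ioc (a k) (a (k+1)), L (u s) := by
        rw [hcdef]
        simp only
        rw [ContinuousLinearMap.map_smul, L.integral_comp_comm (hu_int_Ik k hk)]
      rw [hLc, ← ENNReal.ofReal_coe_nnreal, coe_nnnorm]
      apply ENNReal.ofReal_le_ofReal
      refine AL_avg_point (fun s => L (u s)) measurableSet_Ioc
        (by rw [hIvol k]; exact hVtop) (by rw [hIvol k]; exact hV0)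
        (L.integrable_comp (hu_int_Ik k hk)) ?_ ht
      intro t1 ht1 s1 hs1
      exact AL_osc (fun s => L (u s)) (g u) T hg_int hLw (ha_nonneg k)
        (haT (k+1) (Finset.mem_range.1 hk)) ht1 hs1
    have hGsum : ∑ k ∈ Finset.range n, ENNReal.ofReal (G k) ≤ DE := by
      have heq : ∀ k ∈ Finset.range n, ENNReal.ofReal (G k) =
          ∫⁻ x in Set.Ioc (a k) (a (k+1)), (‖g u x‖₊ : ℝ≥0∞) ∂volume := by
        intro k hk
        rw [hGdef]
        exact ofReal_integral_norm_eq_lintegral_enorm (hg_int.mono_set (hIsub k hk))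
      rw [Finset.sum_congr rfl heq, ← lintegral_biUnion_finset (AL_disj a hamono n)
        (fun k _ => measurableSet_Ioc), AL_iUnion a hamono n, ha0, han, ← hμdef]
      exact hgL1 u hu
    -- Y-term eLpNorm bound
    have hY : eLpNorm (fun t => L (u t) - L (stepX t)) p μ ≤ ENNReal.ofReal κ * DE := by
      rw [eLpNorm_eq_lintegral_rpow_enorm_toReal hp0 hp_top]
      have hb1 : ∫⁻ t, (‖L (u t) - L (stepX t)‖₊ : ℝ≥0∞) ^ q ∂μ ≤ DE ^ q * V := by
        have h := AL_step_bound (n := n) a hamono (fun t => L (u t) - L (stepX t))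
          (fun k => ENNReal.ofReal (G k)) hq0 hYpoint
        rw [ha0, han] at h
        rw [hμdef]
        refine h.trans ?_
        calc ∑ k ∈ Finset.range n, ENNReal.ofReal (G k) ^ q * volume (Set.Ioc (a k) (a (k+1)))
            = (∑ k ∈ Finset.range n, ENNReal.ofReal (G k) ^ q) * V := by
              rw [Finset.sum_mul]
              exact Finset.sum_congr rfl fun k _ => by rw [hIvol k]
          _ ≤ (∑ k ∈ Finset.range n, ENNReal.ofReal (G k)) ^ q * V :=
              mul_le_mul_left (AL_sum_rpow _ _ hq1) _
          _ ≤ DE ^ q * V := mul_le_mul_left (ENNReal.rpow_le_rpow hGsum hq0.le) _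
      calc (∫⁻ t, (‖L (u t) - L (stepX t)‖₊ : ℝ≥0∞) ^ q ∂μ) ^ (1/q)
          ≤ (DE ^ q * V) ^ (1/q) := ENNReal.rpow_le_rpow hb1 (by positivity)
        _ = DE * V ^ (1/q) := by
            rw [ENNReal.mul_rpow_of_nonneg _ _ (by positivity), ← ENNReal.rpow_mul,
              mul_one_div_cancel hq0.ne', ENNReal.rpow_one]
        _ ≤ DE * ENNReal.ofReal κ := mul_le_mul_right hVκ _
        _ = ENNReal.ofReal κ * DE := mul_comm _ _
    -- X-term: step function bounded by Cm (Jensen)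
    have hstepX_bdd : eLpNorm stepX p μ ≤ ENNReal.ofReal Cm := by
      have hstep_enorm : ∀ k ∈ Finset.range n, ∀ t ∈ Set.Ioc (a k) (a (k+1)),
          (‖stepX t‖₊ : ℝ≥0∞) ≤ ((‖c u k‖₊ : ℝ≥0) : ℝ≥0∞) := by
        intro k hk t ht
        rw [hstep_eval k hk t ht]
      have h1 := AL_step_bound (n := n) a hamono stepX
        (fun k => ((‖c u k‖₊ : ℝ≥0) : ℝ≥0∞)) hq0 hstep_enorm
      have husm' : AEStronglyMeasurable u (volume.restrict (Set.Ioc (a 0) (a n))) := by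
        rw [ha0, han, ← hμdef]
        exact husm
      have h2 := AL_avg_bound (n := n) a hamono u hp1 hp_top husm'
        (fun k hk => by rw [hIvol k]; exact hV0)
      rw [eLpNorm_eq_lintegral_rpow_enorm_toReal hp0 hp_top]
      have h3 : (∫⁻ t, ((‖stepX t‖₊ : ℝ≥0) : ℝ≥0∞) ^ q ∂μ) ≤ (ENNReal.ofReal Cm) ^ q := by
        rw [hμdef]
        have hμu : (eLpNorm u p μ) ^ q
            = ∫⁻ t in Set.Ioc (0:ℝ) T, ((‖u t‖₊ : ℝ≥0) : ℝ≥0∞) ^ q ∂volume := by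
          rw [eLpNorm_eq_lintegral_rpow_enorm_toReal hp0 hp_top, ← ENNReal.rpow_mul,
            one_div, inv_mul_cancel₀ hq0.ne', ENNReal.rpow_one, hμdef]; rfl
        calc ∫⁻ t in Set.Ioc (0:ℝ) T, ((‖stepX t‖₊ : ℝ≥0) : ℝ≥0∞) ^ q ∂volume
            = ∫⁻ t in Set.Ioc (a 0) (a n), ((‖stepX t‖₊ : ℝ≥0) : ℝ≥0∞) ^ q ∂volume := by
              rw [ha0, han]
          _ ≤ ∑ k ∈ Finset.range n,
                ((‖c u k‖₊ : ℝ≥0) : ℝ≥0∞) ^ q * volume (Set.Ioc (a k) (a (k+1))) := by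
              rw [ha0, han] at h1
              rw [ha0, han]
              exact h1
          _ ≤ ∫⁻ t in Set.Ioc (a 0) (a n), ((‖u t‖₊ : ℝ≥0) : ℝ≥0∞) ^ q ∂volume := h2
          _ = (eLpNorm u p μ) ^ q := by rw [ha0, han, hμu]
          _ ≤ (ENNReal.ofReal Cm) ^ q := ENNReal.rpow_le_rpow (hCm u hu) hq0.le
      calc (∫⁻ t, ((‖stepX t‖₊ : ℝ≥0) : ℝ≥0∞) ^ q ∂μ) ^ (1/q)
          ≤ ((ENNReal.ofReal Cm) ^ q) ^ (1/q) := ENNReal.rpow_le_rpow h3 (by positivity)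
        _ = ENNReal.ofReal Cm := by
            rw [← ENNReal.rpow_mul, mul_one_div_cancel hq0.ne', ENNReal.rpow_one]
    have hXbound : eLpNorm (fun t => u t - stepX t) p μ
        ≤ ENNReal.ofReal Cm + ENNReal.ofReal Cm := by
      have h : eLpNorm (u - stepX) p μ ≤ eLpNorm u p μ + eLpNorm stepX p μ :=
        eLpNorm_sub_le husm hstepsm hp1
      exact (le_of_eq (by rfl)).trans (h.trans (add_le_add (hCm u hu) hstepX_bdd))
    -- Ehrling combination
    have hLusm : AEStronglyMeasurable (fun t => L (u t)) μ :=
      L.continuous.comp_aestronglyMeasurable husm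
    have hLstepsm : AEStronglyMeasurable (fun t => L (stepX t)) μ :=
      L.continuous.comp_aestronglyMeasurable hstepsm
    have hpnt : ∀ t, ‖jXB (u t) - jXB (stepX t)‖
        ≤ η * ‖u t - stepX t‖ + M * ‖L (u t) - L (stepX t)‖ := by
      intro t
      have h := hEhr (u t - stepX t)
      rw [map_sub] at h
      refine h.trans (le_of_eq ?_)
      congr 2
      rw [hLdef]
      simp [map_sub]
    have herr : eLpNorm (fun t => jXB (u t) - jXB (stepX t)) p μ
        ≤ ENNReal.ofReal (ε/4) := by
      have e1 : η * (Cm + Cm) ≤ ε/8 := by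
        rw [hηdef, div_mul_eq_mul_div, div_le_div_iff₀ (by positivity) (by positivity)]
        nlinarith [hε.le, hCm0]
      have e2 : M * (κ * Dr) ≤ ε/16 := by
        rw [hκdef]
        have h : M * (ε / (16*(M+1)*(Dr+1)) * Dr) = ε * (M*Dr) / (16*(M+1)*(Dr+1)) := by
          ring
        rw [h, div_le_div_iff₀ (by positivity) (by positivity)]
        nlinarith [hε.le, hM0, hDr0, mul_nonneg hM0 hDr0, mul_nonneg hε.le hM0,
          mul_nonneg hε.le hDr0, mul_nonneg (mul_nonneg hε.le hM0) hDr0]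
      calc eLpNorm (fun t => jXB (u t) - jXB (stepX t)) p μ
          ≤ eLpNorm (fun t => η * ‖u t - stepX t‖ + M * ‖L (u t) - L (stepX t)‖) p μ :=
            eLpNorm_mono_real hpnt
        _ ≤ eLpNorm (fun t => η * ‖u t - stepX t‖) p μ
            + eLpNorm (fun t => M * ‖L (u t) - L (stepX t)‖) p μ :=
            eLpNorm_add_le (((husm.sub hstepsm).norm).const_mul η)
              (((hLusm.sub hLstepsm).norm).const_mul M) hp1
        _ = ENNReal.ofReal η * eLpNorm (fun t => u t - stepX t) p μ
            + ENNReal.ofReal M * eLpNorm (fun t => L (u t) - L (stepX t)) p μ := by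
            rw [AL_smul_norm _ hηpos.le, AL_smul_norm _ hM0]
        _ ≤ ENNReal.ofReal η * (ENNReal.ofReal Cm + ENNReal.ofReal Cm)
            + ENNReal.ofReal M * (ENNReal.ofReal κ * DE) :=
            add_le_add (mul_le_mul_right hXbound _) (mul_le_mul_right hY _)
        _ = ENNReal.ofReal (η * (Cm + Cm)) + ENNReal.ofReal (M * (κ * Dr)) := by
            rw [hDE_eq, ← ENNReal.ofReal_add hCm0 hCm0, ← ENNReal.ofReal_mul hηpos.le,
              ← ENNReal.ofReal_mul hκpos.le, ← ENNReal.ofReal_mul hM0]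
        _ ≤ ENNReal.ofReal (ε/8) + ENNReal.ofReal (ε/16) :=
            add_le_add (ENNReal.ofReal_le_ofReal e1) (ENNReal.ofReal_le_ofReal e2)
        _ ≤ ENNReal.ofReal (ε/4) := by
            rw [← ENNReal.ofReal_add (by positivity) (by positivity)]
            exact ENNReal.ofReal_le_ofReal (by linarith)
    -- conclude: distance
    have hy_coe : ⇑(Φ b) =ᵐ[μ] fun t =>
        ∑ k ∈ Finset.range n, (Set.Ioc (a k) (a (k+1))).indicator (fun _ => b k) t := by
      rw [hΦdef]
      exact AL_Phi_coe p n (fun k => Set.Ioc (a k) (a (k+1)))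
        (fun k => measurableSet_Ioc) (fun k => measure_ne_top μ _) b
    have hstepB : ∀ t, (∑ k ∈ Finset.range n,
        (Set.Ioc (a k) (a (k+1))).indicator (fun _ => b k) t) = jXB (stepX t) := by
      intro t
      rw [hstepdef]
      simp only
      rw [map_sum]
      apply Finset.sum_congr rfl
      intro k hk
      rw [hbeq k hk]
      by_cases h : t ∈ Set.Ioc (a k) (a (k+1))
      · rw [Set.indicator_of_mem h, Set.indicator_of_mem h]
      · rw [Set.indicator_of_notMem h, Set.indicator_of_notMem h, map_zero]
    rw [Lp.dist_def]
    have hcongr : eLpNorm (⇑f - ⇑(Φ b)) p μ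
        = eLpNorm (fun t => jXB (u t) - jXB (stepX t)) p μ := by
      apply eLpNorm_congr_ae
      filter_upwards [hfae, hy_coe] with t h1 h2
      rw [Pi.sub_apply, h1, h2, hstepB t]
    rw [hcongr]
    exact ENNReal.toReal_le_of_le_ofReal (by positivity) herr

  -- conclude from main
  obtain ⟨K, hKc, hKnear⟩ := main
  obtain ⟨t0, ht0fin, ht0cover⟩ := Metric.totallyBounded_iff.1 hKc.totallyBounded (ε/2)
    (by linarith)
  refine ⟨t0, ht0fin, ?_⟩
  intro f hf
  obtain ⟨y, hyK, hdy⟩ := hKnear f hf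
  have := ht0cover hyK
  rw [Set.mem_iUnion₂] at this
  obtain ⟨z, hz, hyz⟩ := this
  rw [Set.mem_iUnion₂]
  refine ⟨z, hz, ?_⟩
  rw [Metric.mem_ball] at *
  calc dist f z ≤ dist f y + dist y z := dist_triangle _ _ _
    _ < ε/4 + ε/2 := by
        apply add_lt_add_of_le_of_lt hdy hyz
    _ < ε := by linarith
end

section
/- Let X, B, Y be Banach spaces such that X embeds compactly into B and B embeds continuously into Y. Let T > 0 and r > 1. Let F be a family of functions u : [0,T] → X that is bounded in L^∞(0,T;X), and suppose that each u ∈ F admits a function g_u ∈ L^r(0,T;Y) with u(t) = u(0) + ∫_0^t g_u(s) ds in Y for all t ∈ [0,T], the family {g_u : u ∈ F} being bounded in L^r(0,T;Y). Then F is relatively compact in C([0,T];B), the space of continuous B-valued functions with the supremum norm (after composing with the embedding of X into B). -/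
open MeasureTheory Filter
open scoped ENNReal NNReal


lemma aux_small_rpow {M θ ε : ℝ} (hM : 0 ≤ M) (hθ : 0 < θ) (hε : 0 < ε) :
    ∃ δ > 0, ∀ x : ℝ, 0 ≤ x → x ≤ δ → M * x ^ θ < ε := by
  refine ⟨(ε / (M + 1)) ^ θ⁻¹, Real.rpow_pos_of_pos (div_pos hε (by linarith)) _,
    fun x hx hxδ => ?_⟩
  have h1 : x ^ θ ≤ ε / (M + 1) := by
    have h := Real.rpow_le_rpow hx hxδ hθ.le
    rwa [Real.rpow_inv_rpow (le_of_lt (div_pos hε (by linarith))) hθ.ne'] at h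
  have h2 : M * x ^ θ ≤ M * (ε / (M + 1)) := mul_le_mul_of_nonneg_left h1 hM
  have h3 : M * (ε / (M + 1)) < ε := by
    rw [show M * (ε / (M + 1)) = ε * (M / (M + 1)) by ring]
    have h4 : M / (M + 1) < 1 := (div_lt_one (by linarith)).2 (by linarith)
    nlinarith
  linarith

lemma aux_unif_inv {B Y : Type*} [MetricSpace B] [MetricSpace Y]
    {j : B → Y} (hjc : Continuous j) (hji : Function.Injective j)
    {K : Set B} (hK : IsCompact K) :
    ∀ ε > 0, ∃ δ > 0, ∀ b₁ ∈ K, ∀ b₂ ∈ K, dist (j b₁) (j b₂) < δ → dist b₁ b₂ < ε := by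
  haveI : CompactSpace K := isCompact_iff_compactSpace.mp hK
  set φ : K → Y := fun b => j b with hφ
  have hφc : Continuous φ := hjc.comp continuous_subtype_val
  have hφi : Function.Injective φ := fun a b h => Subtype.ext (hji h)
  have hemb : Topology.IsEmbedding φ := (hφc.isClosedEmbedding hφi).toIsEmbedding
  let e := hemb.toHomeomorph
  haveI : CompactSpace (Set.range φ) := isCompact_iff_compactSpace.mp (isCompact_range hφc)
  have huc : UniformContinuous e.symm := CompactSpace.uniformContinuous_of_continuous e.symm.continuous
  rw [Metric.uniformContinuous_iff] at huc
  intro ε hε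
  obtain ⟨δ, hδ, h⟩ := huc ε hε
  refine ⟨δ, hδ, fun b₁ h₁ b₂ h₂ hd => ?_⟩
  have h1 : dist (e ⟨b₁, h₁⟩) (e ⟨b₂, h₂⟩) < δ := by
    rw [Subtype.dist_eq]; exact hd
  have h2 := h h1
  rwa [e.symm_apply_apply, e.symm_apply_apply, Subtype.dist_eq] at h2

lemma aux_holder {Y : Type*} [NormedAddCommGroup Y] [NormedSpace ℝ Y] [CompleteSpace Y]
    {T : ℝ} {r : ℝ≥0∞} (hr : 1 < r) {f : ℝ → Y} {M θ : ℝ} (hM : 0 ≤ M)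
    (hθ : θ = 1 - 1 / r.toReal)
    (hmem : MemLp f r (volume.restrict (Set.Ioc (0:ℝ) T)))
    (hbdd : eLpNorm f r (volume.restrict (Set.Ioc (0:ℝ) T)) ≤ ENNReal.ofReal M)
    {s t : ℝ} (hs : 0 ≤ s) (hst : s ≤ t) (htT : t ≤ T) :
    ‖∫ x in Set.Ioc s t, f x‖ ≤ M * (t - s) ^ θ := by
  haveI : IsFiniteMeasure (volume.restrict (Set.Ioc (0:ℝ) T)) :=
    ⟨by rw [Measure.restrict_apply_univ, Real.volume_Ioc]; exact ENNReal.ofReal_lt_top⟩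
  have hmono : volume.restrict (Set.Ioc s t) ≤ volume.restrict (Set.Ioc (0:ℝ) T) :=
    Measure.restrict_mono (Set.Ioc_subset_Ioc hs htT) le_rfl
  have hmeas' : AEStronglyMeasurable f (volume.restrict (Set.Ioc s t)) :=
    hmem.1.mono_measure hmono
  have h1 : (‖∫ x in Set.Ioc s t, f x‖₊ : ℝ≥0∞) ≤ eLpNorm f 1 (volume.restrict (Set.Ioc s t)) := by
    rw [eLpNorm_one_eq_lintegral_enorm]
    exact enorm_integral_le_lintegral_enorm _
  have h2 := eLpNorm_le_eLpNorm_mul_rpow_measure_univ (p := 1) (q := r) hr.le hmeas'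
  have hμuniv : (volume.restrict (Set.Ioc s t)) Set.univ = ENNReal.ofReal (t - s) := by
    rw [Measure.restrict_apply_univ, Real.volume_Ioc]
  have h3 : eLpNorm f r (volume.restrict (Set.Ioc s t)) ≤ ENNReal.ofReal M :=
    (eLpNorm_mono_measure _ hmono).trans hbdd
  have hexp : 1 / (1:ℝ≥0∞).toReal - 1 / r.toReal = θ := by
    rw [hθ]; norm_num
  have h4 : (‖∫ x in Set.Ioc s t, f x‖₊ : ℝ≥0∞) ≤ ENNReal.ofReal M * ENNReal.ofReal (t - s) ^ θ := by
    refine h1.trans (h2.trans ?_)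
    rw [hμuniv, hexp]
    exact mul_le_mul_left h3 _
  have hθ0 : 0 ≤ θ := by
    rcases eq_or_ne r ∞ with h | h
    · simp [hθ, h]
    · have hr1 : 1 < r.toReal := by
        rw [show (1:ℝ) = (1:ℝ≥0∞).toReal by simp]
        exact (ENNReal.toReal_lt_toReal (by simp) h).mpr hr
      rw [hθ]
      have : 1 / r.toReal ≤ 1 := by
        rw [div_le_one (by linarith)]; linarith
      linarith
  have hfin : ENNReal.ofReal M * ENNReal.ofReal (t - s) ^ θ ≠ ∞ :=
    ENNReal.mul_ne_top ENNReal.ofReal_ne_top (ENNReal.rpow_ne_top_of_nonneg hθ0 ENNReal.ofReal_ne_top)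
  have h5 := ENNReal.toReal_mono hfin h4
  rw [ENNReal.coe_toReal, coe_nnnorm, ENNReal.toReal_mul, ENNReal.toReal_ofReal hM,
    ← ENNReal.toReal_rpow, ENNReal.toReal_ofReal (by linarith)] at h5
  exact h5


/-- **Aubin--Lions lemma** (Simon, Corollary 4, case `p = ∞`).
Let `X ⊂⊂ B ⊂ Y` be Banach spaces (compact embedding `jXB`, continuous embedding `jBY`).
If `F` is a family of functions `[0,T] → X` bounded in `L^∞(0,T;X)` whose time-derivatives
`g u` (in the sense of primitives, valued in `Y`) are bounded in `L^r(0,T;Y)` with `r > 1`,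
then (composing with the embedding into `B`) `F` consists of continuous `B`-valued functions
and is relatively compact in `C([0,T];B)`. -/
theorem aubin_lions_continuous
    {X B Y : Type*}
    [NormedAddCommGroup X] [NormedSpace ℝ X] [CompleteSpace X]
    [NormedAddCommGroup B] [NormedSpace ℝ B] [CompleteSpace B]
    [NormedAddCommGroup Y] [NormedSpace ℝ Y] [CompleteSpace Y]
    (jXB : X →L[ℝ] B) (hjXB_inj : Function.Injective jXB)
    (hjXB_cpt : ∀ s : Set X, Bornology.IsBounded s → IsCompact (closure (jXB '' s)))
    (jBY : B →L[ℝ] Y) (hjBY_inj : Function.Injective jBY)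
    (T : ℝ) (hT : 0 < T)
    (r : ℝ≥0∞) (hr : 1 < r)
    (F : Set (ℝ → X)) (g : (ℝ → X) → ℝ → Y) (C C' : ℝ)
    (hF_mem : ∀ u ∈ F, MemLp u ∞ (volume.restrict (Set.Ioc (0:ℝ) T)))
    (hF_bdd : ∀ u ∈ F, eLpNorm u ∞ (volume.restrict (Set.Ioc (0:ℝ) T)) ≤ ENNReal.ofReal C)
    (hg_mem : ∀ u ∈ F, MemLp (g u) r (volume.restrict (Set.Ioc (0:ℝ) T)))
    (hg_bdd : ∀ u ∈ F, eLpNorm (g u) r (volume.restrict (Set.Ioc (0:ℝ) T)) ≤ ENNReal.ofReal C')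
    (h_prim : ∀ u ∈ F, ∀ t ∈ Set.Icc (0:ℝ) T,
      jBY (jXB (u t)) = jBY (jXB (u 0)) + ∫ s in Set.Ioc (0:ℝ) t, g u s) :
    (∀ u ∈ F, Continuous fun t : Set.Icc (0:ℝ) T => jXB (u t)) ∧
    IsCompact (closure
      {f : C(Set.Icc (0:ℝ) T, B) | ∃ u ∈ F, ∀ t : Set.Icc (0:ℝ) T, f t = jXB (u t)}) := by
  haveI : IsFiniteMeasure (volume.restrict (Set.Ioc (0:ℝ) T)) :=
    ⟨by rw [Measure.restrict_apply_univ, Real.volume_Ioc]; exact ENNReal.ofReal_lt_top⟩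
  set C₀ : ℝ := max C 0 with hC₀def
  set M : ℝ := max C' 0 with hMdef
  have hC₀ : 0 ≤ C₀ := le_max_right _ _
  have hM : 0 ≤ M := le_max_right _ _
  set θ : ℝ := 1 - 1 / r.toReal with hθdef
  have hθ0 : 0 < θ := by
    rcases eq_or_ne r ∞ with h | h
    · simp [hθdef, h]
    · have hr1 : 1 < r.toReal := by
        rw [show (1:ℝ) = (1:ℝ≥0∞).toReal by simp]
        exact (ENNReal.toReal_lt_toReal (by simp) h).mpr hr
      have : 1 / r.toReal < 1 := by
        rw [div_lt_one (by linarith)]; linarith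
      simp only [hθdef]; linarith
  -- Hölder continuity of `t ↦ jBY (jXB (u t))` on `[0, T]`
  have hg_bdd' : ∀ u ∈ F,
      eLpNorm (g u) r (volume.restrict (Set.Ioc (0:ℝ) T)) ≤ ENNReal.ofReal M :=
    fun u hu => (hg_bdd u hu).trans (ENNReal.ofReal_le_ofReal (le_max_left _ _))
  have hH : ∀ u ∈ F, ∀ s t : ℝ, 0 ≤ s → s ≤ t → t ≤ T →
      ‖jBY (jXB (u t)) - jBY (jXB (u s))‖ ≤ M * (t - s) ^ θ := by
    intro u hu s t hs hst htT
    have hint : IntegrableOn (g u) (Set.Ioc (0:ℝ) T) volume :=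
      memLp_one_iff_integrable.mp ((hg_mem u hu).mono_exponent hr.le)
    have hint1 : IntegrableOn (g u) (Set.Ioc (0:ℝ) s) volume :=
      hint.mono_set (Set.Ioc_subset_Ioc le_rfl (hst.trans htT))
    have hint2 : IntegrableOn (g u) (Set.Ioc s t) volume :=
      hint.mono_set (Set.Ioc_subset_Ioc hs htT)
    have hsplit : ∫ x in Set.Ioc (0:ℝ) t, g u x
        = (∫ x in Set.Ioc (0:ℝ) s, g u x) + ∫ x in Set.Ioc s t, g u x := by
      rw [← MeasureTheory.setIntegral_union (Set.Ioc_disjoint_Ioc_of_le le_rfl) measurableSet_Ioc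
        hint1 hint2, Set.Ioc_union_Ioc_eq_Ioc hs hst]
    have hdiff : jBY (jXB (u t)) - jBY (jXB (u s)) = ∫ x in Set.Ioc s t, g u x := by
      rw [h_prim u hu t ⟨hs.trans hst, htT⟩, h_prim u hu s ⟨hs, hst.trans htT⟩, hsplit]
      abel
    rw [hdiff]
    exact aux_holder hr hM rfl (hg_mem u hu) (hg_bdd' u hu) hs hst htT
  have hH' : ∀ u ∈ F, ∀ s ∈ Set.Icc (0:ℝ) T, ∀ t ∈ Set.Icc (0:ℝ) T,
      ‖jBY (jXB (u t)) - jBY (jXB (u s))‖ ≤ M * |t - s| ^ θ := by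
    intro u hu s hsI t htI
    rcases le_total s t with h | h
    · rw [abs_of_nonneg (sub_nonneg.2 h)]; exact hH u hu s t hsI.1 h htI.2
    · rw [abs_sub_comm, abs_of_nonneg (sub_nonneg.2 h), norm_sub_rev]
      exact hH u hu t s htI.1 h hsI.2
  -- a.e. bound on `‖u‖`
  have hae : ∀ u ∈ F, ∀ᵐ x ∂volume, x ∈ Set.Ioc (0:ℝ) T → ‖u x‖ ≤ C₀ := by
    intro u hu
    rw [← ae_restrict_iff' measurableSet_Ioc]
    have h1 : ∀ᵐ x ∂(volume.restrict (Set.Ioc (0:ℝ) T)),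
        (‖u x‖₊ : ℝ≥0∞) ≤ eLpNormEssSup u (volume.restrict (Set.Ioc (0:ℝ) T)) :=
      ae_le_eLpNormEssSup
    filter_upwards [h1] with x hx
    have h2 : (‖u x‖₊ : ℝ≥0∞) ≤ ENNReal.ofReal C₀ := by
      refine hx.trans ?_
      rw [← eLpNorm_exponent_top]
      exact (hF_bdd u hu).trans (ENNReal.ofReal_le_ofReal (le_max_left _ _))
    have h3 := ENNReal.toReal_mono ENNReal.ofReal_ne_top h2
    rwa [ENNReal.coe_toReal, coe_nnnorm, ENNReal.toReal_ofReal hC₀] at h3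
  -- density of good times
  have hdense : ∀ t ∈ Set.Icc (0:ℝ) T, ∀ δ > (0:ℝ), ∀ u ∈ F,
      ∃ x, x ∈ Set.Ioc (0:ℝ) T ∧ |x - t| < δ ∧ ‖u x‖ ≤ C₀ := by
    intro t htI δ hδ u hu
    by_contra hcon
    push_neg at hcon
    have hsub : Set.Ioo (max 0 (t - δ)) (min T (t + δ))
        ⊆ {x | ¬ (x ∈ Set.Ioc (0:ℝ) T → ‖u x‖ ≤ C₀)} := by
      intro x hx
      have hx1 : x ∈ Set.Ioc (0:ℝ) T :=
        ⟨lt_of_le_of_lt (le_max_left _ _) hx.1, le_of_lt (lt_of_lt_of_le hx.2 (min_le_left _ _))⟩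
      have hx2 : |x - t| < δ := by
        rw [abs_lt]
        constructor
        · have := lt_of_le_of_lt (le_max_right 0 (t - δ)) hx.1; linarith
        · have := lt_of_lt_of_le hx.2 (min_le_right T (t + δ)); linarith
      intro himp
      exact absurd (himp hx1) (by simpa using (hcon x hx1 hx2))
    have h0 := measure_mono_null hsub ((ae_iff).mp (hae u hu))
    rw [Real.volume_Ioo] at h0
    have hlt : max 0 (t - δ) < min T (t + δ) := by
      apply max_lt
      · exact lt_min hT (by linarith [htI.1])
      · exact lt_min (by linarith [htI.2]) (by linarith)
    exact absurd h0 (ne_of_gt (ENNReal.ofReal_pos.2 (by linarith)))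
  -- the compact set K
  set K : Set B := closure (jXB '' Metric.closedBall (0:X) C₀) with hKdef
  have hK : IsCompact K := hjXB_cpt _ Metric.isBounded_closedBall
  -- pointwise membership in K
  have hmemK : ∀ u ∈ F, ∀ t ∈ Set.Icc (0:ℝ) T, jXB (u t) ∈ K := by
    intro u hu t htI
    have hQc : IsCompact (jBY '' K) := hK.image jBY.continuous
    have hcl : jBY (jXB (u t)) ∈ closure (jBY '' (jXB '' Metric.closedBall (0:X) C₀)) := by
      rw [Metric.mem_closure_iff]
      intro ε hε
      obtain ⟨δ, hδ, hsm⟩ := aux_small_rpow hM hθ0 hε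
      obtain ⟨x, hxI, hxd, hxb⟩ := hdense t htI δ hδ u hu
      refine ⟨jBY (jXB (u x)), ⟨jXB (u x), ⟨u x, ?_, rfl⟩, rfl⟩, ?_⟩
      · exact Metric.mem_closedBall.2 (by simpa [dist_eq_norm] using hxb)
      · rw [dist_eq_norm]
        refine lt_of_le_of_lt (hH' u hu x ⟨le_of_lt hxI.1, hxI.2⟩ t htI) ?_
        have : |t - x| < δ := by rw [abs_sub_comm]; exact hxd
        exact hsm _ (abs_nonneg _) this.le
    have hmem : jBY (jXB (u t)) ∈ jBY '' K := by
      refine closure_minimal (Set.image_mono subset_closure) hQc.isClosed hcl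
    obtain ⟨b, hbK, hb⟩ := hmem
    rwa [← hjBY_inj hb]
  -- uniform modulus of continuity in B
  have hmod : ∀ ε > (0:ℝ), ∃ δ > (0:ℝ), ∀ u ∈ F, ∀ s ∈ Set.Icc (0:ℝ) T,
      ∀ t ∈ Set.Icc (0:ℝ) T, |t - s| < δ → dist (jXB (u t)) (jXB (u s)) < ε := by
    intro ε hε
    obtain ⟨δ₁, hδ₁, hinv⟩ := aux_unif_inv jBY.continuous hjBY_inj hK ε hε
    obtain ⟨δ, hδ, hsm⟩ := aux_small_rpow hM hθ0 hδ₁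
    refine ⟨δ, hδ, fun u hu s hsI t htI hlt => ?_⟩
    refine hinv _ (hmemK u hu t htI) _ (hmemK u hu s hsI) ?_
    rw [dist_eq_norm]
    calc ‖jBY (jXB (u t)) - jBY (jXB (u s))‖ ≤ M * |t - s| ^ θ := hH' u hu s hsI t htI
    _ < δ₁ := hsm _ (abs_nonneg _) hlt.le
  -- part 1: continuity
  have hcont : ∀ u ∈ F, Continuous fun t : Set.Icc (0:ℝ) T => jXB (u t) := by
    intro u hu
    rw [Metric.continuous_iff]
    intro a ε hε
    obtain ⟨δ, hδ, h⟩ := hmod ε hε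
    refine ⟨δ, hδ, fun x hx => ?_⟩
    refine h u hu a a.2 x x.2 ?_
    rwa [Subtype.dist_eq, Real.dist_eq] at hx
  refine ⟨hcont, ?_⟩
  -- part 2: Arzelà–Ascoli
  set S : Set C(Set.Icc (0:ℝ) T, B) :=
    {f | ∃ u ∈ F, ∀ t : Set.Icc (0:ℝ) T, f t = jXB (u t)} with hSdef
  have hclemb : Topology.IsClosedEmbedding
      (UniformOnFun.ofFun {K' : Set (Set.Icc (0:ℝ) T) | IsCompact K'} ∘
        (fun f : C(Set.Icc (0:ℝ) T, B) => (f : Set.Icc (0:ℝ) T → B))) := by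
    refine ⟨ContinuousMap.isUniformEmbedding_toUniformOnFunIsCompact.isEmbedding, ?_⟩
    rw [show (UniformOnFun.ofFun {K' : Set (Set.Icc (0:ℝ) T) | IsCompact K'} ∘
        (fun f : C(Set.Icc (0:ℝ) T, B) => (f : Set.Icc (0:ℝ) T → B)))
      = ContinuousMap.toUniformOnFunIsCompact from rfl,
      ContinuousMap.range_toUniformOnFunIsCompact]
    exact UniformOnFun.isClosed_setOf_continuous CompactlyCoherentSpace.isCoherentWith
  have heq : Equicontinuous (fun f : S => ((f : C(Set.Icc (0:ℝ) T, B)) : Set.Icc (0:ℝ) T → B)) := by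
    intro x₀
    rw [Metric.equicontinuousAt_iff]
    intro ε hε
    obtain ⟨δ, hδ, h⟩ := hmod ε hε
    refine ⟨δ, hδ, fun x hx i => ?_⟩
    obtain ⟨u, hu, hfu⟩ := i.2
    rw [hfu x₀, hfu x]
    refine h u hu x x.2 x₀ x₀.2 ?_
    rw [Subtype.dist_eq, Real.dist_eq] at hx
    rwa [abs_sub_comm]
  refine ArzelaAscoli.isCompact_closure_of_isClosedEmbedding
    (F := fun f : C(Set.Icc (0:ℝ) T, B) => (f : Set.Icc (0:ℝ) T → B))
    (fun _ hK' => hK') hclemb (fun K' _ => heq.equicontinuousOn K') ?_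
  intro K' _ x _
  refine ⟨K, hK, fun f hf => ?_⟩
  obtain ⟨u, hu, hfu⟩ := hf
  show f x ∈ K
  rw [hfu x]
  exact hmemK u hu x x.2
end

section
/- Let H be a real Hilbert space, E a real normed vector space, and j : H → E an injective continuous linear map. Let (u_n) be a sequence in H that is bounded in H, and suppose that (j(u_n)) converges in E to some v ∈ E. Then there exists a unique u ∈ H with j(u) = v, and u_n converges weakly to u in H, i.e. ⟨u_n, w⟩ → ⟨u, w⟩ for every w ∈ H. -/
open Filter

open scoped RealInnerProductSpace

/-- If `(u n)` is a bounded sequence in a real Hilbert space `H` and its image under an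
injective continuous linear map `j : H → E` converges (strongly) in the normed space `E`
to some `v`, then there is a unique `u ∈ H` with `j u = v` and `u n` converges weakly
to `u` in `H`. -/
theorem weak_limit_of_bounded_of_image_tendsto
    {H E : Type*}
    [NormedAddCommGroup H] [InnerProductSpace ℝ H] [CompleteSpace H]
    [NormedAddCommGroup E] [NormedSpace ℝ E]
    (j : H →L[ℝ] E) (hj : Function.Injective j)
    (u : ℕ → H) (hbdd : ∃ C : ℝ, ∀ n, ‖u n‖ ≤ C)
    (v : E) (hconv : Tendsto (fun n => j (u n)) atTop (nhds v)) :
    ∃! l : H, j l = v ∧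
      ∀ w : H, Tendsto (fun n => (inner ℝ (u n) w : ℝ)) atTop (nhds (inner ℝ l w)) := by
  obtain ⟨C, hC⟩ := hbdd
  have hC0 : 0 ≤ C := le_trans (norm_nonneg _) (hC 0)
  -- pull back dual functionals
  set T : StrongDual ℝ E → H := fun f => (InnerProductSpace.toDual ℝ H).symm (f.comp j)
    with hTdef
  have hTapp : ∀ (f : StrongDual ℝ E) (x : H), ⟪T f, x⟫ = f (j x) := fun f x =>
    InnerProductSpace.toDual_symm_apply
  set S : Submodule ℝ H := Submodule.span ℝ (Set.range T) with hS
  have hdense : Dense (S : Set H) := by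
    rw [Submodule.dense_iff_topologicalClosure_eq_top,
      Submodule.topologicalClosure_eq_top_iff, Submodule.eq_bot_iff]
    intro x hx
    apply hj
    rw [map_zero]
    apply NormedSpace.eq_zero_of_forall_dual_eq_zero ℝ
    intro f
    have h1 := (Submodule.mem_orthogonal S x).mp hx (T f)
      (Submodule.subset_span (Set.mem_range_self f))
    rw [hTapp] at h1
    exact h1
  -- convergence on S
  have hSconv : ∀ w ∈ S, ∃ c : ℝ, Tendsto (fun n => ⟪w, u n⟫) atTop (nhds c) := by
    intro w hw
    induction hw using Submodule.span_induction with
    | mem x hx =>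
      obtain ⟨f, rfl⟩ := hx
      refine ⟨f v, ?_⟩
      have : (fun n => ⟪T f, u n⟫) = fun n => f (j (u n)) := by
        ext n; exact hTapp f (u n)
      rw [this]
      exact (f.continuous.tendsto v).comp hconv
    | zero => exact ⟨0, by simp⟩
    | add x y _ _ hx hy =>
      obtain ⟨cx, hcx⟩ := hx; obtain ⟨cy, hcy⟩ := hy
      exact ⟨cx + cy, by simpa [inner_add_left] using hcx.add hcy⟩
    | smul a x _ hx =>
      obtain ⟨cx, hcx⟩ := hx
      exact ⟨a * cx, by simpa [real_inner_smul_left] using hcx.const_mul a⟩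
  -- Cauchy for all w
  have key : ∀ w : H, ∃ c : ℝ, Tendsto (fun n => ⟪w, u n⟫) atTop (nhds c) := by
    intro w
    refine cauchySeq_tendsto_of_complete ?_
    rw [Metric.cauchySeq_iff]
    intro ε hε
    have hpos : 0 < ε / (4 * (C + 1)) := by positivity
    obtain ⟨w', hw'S, hw'⟩ := Metric.mem_closure_iff.mp (hdense.closure_eq ▸ Set.mem_univ w
      : w ∈ closure (S : Set H)) _ hpos
    have hclose : ∀ n, |⟪w, u n⟫ - ⟪w', u n⟫| ≤ ε / 4 := by
      intro n
      have : ⟪w, u n⟫ - ⟪w', u n⟫ = ⟪w - w', u n⟫ := by rw [inner_sub_left]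
      rw [this]
      calc |⟪w - w', u n⟫| ≤ ‖w - w'‖ * ‖u n‖ := abs_real_inner_le_norm _ _
        _ ≤ (ε / (4 * (C + 1))) * (C + 1) := by
            apply mul_le_mul (le_of_lt (by rwa [dist_eq_norm] at hw')) _ (norm_nonneg _)
              (le_of_lt hpos)
            exact le_trans (hC n) (by linarith)
        _ = ε / 4 := by field_simp
    obtain ⟨c, hc⟩ := hSconv w' hw'S
    obtain ⟨N, hN⟩ := Metric.cauchySeq_iff.mp hc.cauchySeq (ε / 3) (by linarith)
    refine ⟨N, fun m hm n hn => ?_⟩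
    have h1 := hclose m
    have h2 := hclose n
    have h3 := hN m hm n hn
    rw [Real.dist_eq] at h3 ⊢
    calc |⟪w, u m⟫ - ⟪w, u n⟫|
        ≤ |⟪w, u m⟫ - ⟪w', u m⟫| + |⟪w', u m⟫ - ⟪w', u n⟫| + |⟪w', u n⟫ - ⟪w, u n⟫| := by
          have := abs_sub_le (⟪w, u m⟫) (⟪w', u m⟫) (⟪w, u n⟫)
          have := abs_sub_le (⟪w', u m⟫) (⟪w', u n⟫) (⟪w, u n⟫)
          linarith [abs_sub_le (⟪w, u m⟫) (⟪w', u m⟫) (⟪w, u n⟫),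
            abs_sub_le (⟪w', u m⟫) (⟪w', u n⟫) (⟪w, u n⟫)]
      _ < ε := by
          rw [abs_sub_comm (⟪w', u n⟫)] at *
          linarith
  choose L hL using key
  -- L is linear and bounded
  have hLadd : ∀ w₁ w₂, L (w₁ + w₂) = L w₁ + L w₂ := fun w₁ w₂ =>
    tendsto_nhds_unique (by simpa [inner_add_left] using hL (w₁ + w₂)) ((hL w₁).add (hL w₂))
  have hLsmul : ∀ (a : ℝ) w, L (a • w) = a * L w := fun a w =>
    tendsto_nhds_unique (by simpa [real_inner_smul_left] using hL (a • w)) ((hL w).const_mul a)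
  have hLbound : ∀ w, ‖L w‖ ≤ C * ‖w‖ := by
    intro w
    rw [Real.norm_eq_abs]
    refine le_of_tendsto (hL w).abs (Eventually.of_forall fun n => ?_)
    calc |⟪w, u n⟫| ≤ ‖w‖ * ‖u n‖ := abs_real_inner_le_norm _ _
      _ ≤ ‖w‖ * C := mul_le_mul_of_nonneg_left (hC n) (norm_nonneg _)
      _ = C * ‖w‖ := mul_comm _ _
  set φ : H →L[ℝ] ℝ := LinearMap.mkContinuous
    { toFun := L, map_add' := hLadd, map_smul' := hLsmul } C hLbound with hφ
  set l : H := (InnerProductSpace.toDual ℝ H).symm φ with hl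
  have hlw : ∀ w, ⟪l, w⟫ = L w := fun w => InnerProductSpace.toDual_symm_apply
  have hjl : j l = v := by
    rw [NormedSpace.eq_iff_forall_dual_eq ℝ]
    intro g
    have h1 : ⟪T g, l⟫ = g (j l) := hTapp g l
    have h2 : Tendsto (fun n => g (j (u n))) atTop (nhds (g v)) :=
      (g.continuous.tendsto v).comp hconv
    have h3 : Tendsto (fun n => ⟪T g, u n⟫) atTop (nhds (L (T g))) := hL (T g)
    have h4 : (fun n => ⟪T g, u n⟫) = fun n => g (j (u n)) := by
      ext n; exact hTapp g (u n)
    rw [h4] at h3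
    have h5 : L (T g) = g v := tendsto_nhds_unique h3 h2
    rw [← h1, real_inner_comm, hlw, h5]
  refine ⟨l, ⟨hjl, fun w => ?_⟩, fun l' hl' => hj (by rw [hl'.1, hjl])⟩
  have heq : (fun n => (inner ℝ (u n) w : ℝ)) = fun n => ⟪w, u n⟫ := by
    ext n; exact real_inner_comm _ _
  rw [heq, show (inner ℝ l w : ℝ) = L w from hlw w]
  exact hL w
end

section
/- Let H be a real Hilbert space, E a real normed vector space, and j : H → E an injective continuous linear map. Let T > 0 and let (u_n) be a sequence of functions u_n : [0,T] → H with sup_{n} sup_{t∈[0,T]} ‖u_n(t)‖_H ≤ C for some constant C. Let u : [0,T] → E and suppose sup_{t∈[0,T]} ‖j(u_n(t)) − u(t)‖_E → 0 as n → ∞. Then for every t ∈ [0,T] there exists a (unique) v(t) ∈ H with j(v(t)) = u(t), ‖v(t)‖_H ≤ C, and for every t ∈ [0,T] the whole sequence u_n(t) converges weakly to v(t) in H. -/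
open Filter

/-- Let `j : H → E` be an injective continuous linear map from a real Hilbert space `H`
to a normed space `E`. If `u n : [0,T] → H` are uniformly bounded by `C` in `H` and
`j ∘ u n` converges uniformly on `[0,T]` to `v : [0,T] → E`, then for every `t ∈ [0,T]`
there is a unique `w ∈ H` with `j w = v t`, `‖w‖ ≤ C`, and the whole sequence `u n t`
converges weakly to `w` in `H`. -/
theorem weak_limit_uniform_of_bounded_of_image_tendstoUniformly
    {H E : Type*}
    [NormedAddCommGroup H] [InnerProductSpace ℝ H] [CompleteSpace H]
    [NormedAddCommGroup E] [NormedSpace ℝ E]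
    (j : H →L[ℝ] E) (hj : Function.Injective j)
    (T : ℝ) (hT : 0 < T)
    (u : ℕ → ℝ → H) (C : ℝ)
    (hbdd : ∀ n, ∀ t ∈ Set.Icc (0:ℝ) T, ‖u n t‖ ≤ C)
    (v : ℝ → E)
    (hconv : TendstoUniformlyOn (fun n t => j (u n t)) v atTop (Set.Icc (0:ℝ) T)) :
    ∀ t ∈ Set.Icc (0:ℝ) T, ∃! w : H, j w = v t ∧ ‖w‖ ≤ C ∧
      ∀ z : H, Tendsto (fun n => (inner ℝ (u n t) z : ℝ)) atTop (nhds (inner ℝ w z)) := by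
  intro t ht
  set a : ℕ → H := fun n => u n t with ha
  have hC0 : 0 ≤ C := le_trans (norm_nonneg _) (hbdd 0 t ht)
  have hja : Tendsto (fun n => j (a n)) atTop (nhds (v t)) := hconv.tendsto_at ht
  have haC : ∀ n, ‖a n‖ ≤ C := fun n => hbdd n t ht
  -- the submodule of "good" vectors
  set S : Submodule ℝ H :=
    { carrier := {y | ∃ φ : E →L[ℝ] ℝ, ∀ x : H, (inner ℝ y x : ℝ) = φ (j x)}
      zero_mem' := ⟨0, by simp⟩
      add_mem' := by
        rintro y1 y2 ⟨φ1, h1⟩ ⟨φ2, h2⟩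
        exact ⟨φ1 + φ2, fun x => by simp [inner_add_left, h1 x, h2 x]⟩
      smul_mem' := by
        rintro c y ⟨φ, h⟩
        exact ⟨c • φ, fun x => by simp [inner_smul_left, h x]⟩ } with hS
  have hmemS : ∀ φ : E →L[ℝ] ℝ,
      (InnerProductSpace.toDual ℝ H).symm (φ.comp j) ∈ S := by
    intro φ
    exact ⟨φ, fun x => by rw [InnerProductSpace.toDual_symm_apply]; rfl⟩
  have hSdense : S.topologicalClosure = ⊤ := by
    rw [Submodule.topologicalClosure_eq_top_iff]
    rw [Submodule.eq_bot_iff]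
    intro x hx
    apply hj
    rw [map_zero]
    apply NormedSpace.eq_zero_of_forall_dual_eq_zero ℝ
    intro φ
    have h1 := hx _ (hmemS φ)
    rw [InnerProductSpace.toDual_symm_apply] at h1
    exact h1
  -- convergence on S
  have hconvS : ∀ y ∈ S, ∃ L : ℝ, Tendsto (fun n => (inner ℝ (a n) y : ℝ)) atTop (nhds L) := by
    rintro y ⟨φ, hφ⟩
    refine ⟨φ (v t), ?_⟩
    have : ∀ n, (inner ℝ (a n) y : ℝ) = φ (j (a n)) := by
      intro n; rw [real_inner_comm]; exact hφ (a n)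
    simp_rw [this]
    exact (φ.continuous.tendsto _).comp hja
  -- Cauchy for every z
  have hCauchy : ∀ z : H, CauchySeq (fun n => (inner ℝ (a n) z : ℝ)) := by
    intro z
    rw [Metric.cauchySeq_iff]
    intro ε hε
    have hz : z ∈ S.topologicalClosure := by rw [hSdense]; trivial
    obtain ⟨y, hyS, hyz⟩ := Metric.mem_closure_iff.mp hz (ε / (4 * (C + 1)))
      (by positivity)
    obtain ⟨L, hL⟩ := hconvS y hyS
    have hLc : CauchySeq (fun n => (inner ℝ (a n) y : ℝ)) := hL.cauchySeq
    rw [Metric.cauchySeq_iff] at hLc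
    obtain ⟨N, hN⟩ := hLc (ε / 2) (by positivity)
    refine ⟨N, fun m hm n hn => ?_⟩
    have key : ∀ k, |(inner ℝ (a k) z : ℝ) - inner ℝ (a k) y| ≤ ε / 4 := by
      intro k
      have : (inner ℝ (a k) z : ℝ) - inner ℝ (a k) y = inner ℝ (a k) (z - y) := by
        rw [inner_sub_right]
      rw [this]
      calc |(inner ℝ (a k) (z - y) : ℝ)| ≤ ‖a k‖ * ‖z - y‖ := abs_real_inner_le_norm _ _
        _ ≤ C * (ε / (4 * (C + 1))) := by
            apply mul_le_mul (haC k) _ (norm_nonneg _) hC0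
            rw [← dist_eq_norm]
            exact le_of_lt hyz
        _ ≤ ε / 4 := by
            rw [← mul_div_assoc, div_le_div_iff₀ (by positivity) (by norm_num : (0:ℝ) < 4)]
            nlinarith
    have h1 := key m
    have h2 := key n
    have h3 := hN m hm n hn
    rw [Real.dist_eq] at h3 ⊢
    have : (inner ℝ (a m) z : ℝ) - inner ℝ (a n) z =
        ((inner ℝ (a m) z : ℝ) - inner ℝ (a m) y) + ((inner ℝ (a m) y : ℝ) - inner ℝ (a n) y)
        + ((inner ℝ (a n) y : ℝ) - inner ℝ (a n) z) := by ring
    rw [this]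
    calc _ ≤ |(inner ℝ (a m) z : ℝ) - inner ℝ (a m) y| + |(inner ℝ (a m) y : ℝ) - inner ℝ (a n) y|
        + |(inner ℝ (a n) y : ℝ) - inner ℝ (a n) z| := abs_add_three _ _ _
      _ < ε := by
          have h2' : |(inner ℝ (a n) y : ℝ) - inner ℝ (a n) z| ≤ ε / 4 := by
            rw [abs_sub_comm]; exact h2
          linarith
  -- limits exist for every z
  have hlim : ∀ z : H, ∃ L : ℝ, Tendsto (fun n => (inner ℝ (a n) z : ℝ)) atTop (nhds L) :=
    fun z => cauchySeq_tendsto_of_complete (hCauchy z)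
  choose L hL using hlim
  -- L is a bounded linear functional
  have hLadd : ∀ z1 z2, L (z1 + z2) = L z1 + L z2 := by
    intro z1 z2
    refine tendsto_nhds_unique (hL (z1 + z2)) ?_
    have := (hL z1).add (hL z2)
    simpa [inner_add_right] using this
  have hLsmul : ∀ (c : ℝ) z, L (c • z) = c * L z := by
    intro c z
    refine tendsto_nhds_unique (hL (c • z)) ?_
    have := (hL z).const_mul c
    simpa [real_inner_smul_right] using this
  have hLbound : ∀ z, |L z| ≤ C * ‖z‖ := by
    intro z
    have : Tendsto (fun n => |(inner ℝ (a n) z : ℝ)|) atTop (nhds |L z|) := (hL z).abs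
    refine le_of_tendsto this (Eventually.of_forall fun n => ?_)
    calc |(inner ℝ (a n) z : ℝ)| ≤ ‖a n‖ * ‖z‖ := abs_real_inner_le_norm _ _
      _ ≤ C * ‖z‖ := mul_le_mul_of_nonneg_right (haC n) (norm_nonneg _)
  set f : H →L[ℝ] ℝ := LinearMap.mkContinuous
    { toFun := L, map_add' := hLadd, map_smul' := hLsmul } C
    (fun z => by simpa using hLbound z) with hf
  set w : H := (InnerProductSpace.toDual ℝ H).symm f with hw
  have hwz : ∀ z : H, (inner ℝ w z : ℝ) = L z := by
    intro z
    rw [hw, InnerProductSpace.toDual_symm_apply]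
    rfl
  -- j w = v t
  have hjw : j w = v t := by
    rw [← sub_eq_zero]
    apply NormedSpace.eq_zero_of_forall_dual_eq_zero ℝ
    intro φ
    rw [map_sub, sub_eq_zero]
    set y := (InnerProductSpace.toDual ℝ H).symm (φ.comp j) with hy
    have h1 : ∀ x : H, (inner ℝ y x : ℝ) = φ (j x) := fun x => by
      rw [hy, InnerProductSpace.toDual_symm_apply]; rfl
    have h2 : Tendsto (fun n => (inner ℝ (a n) y : ℝ)) atTop (nhds (φ (v t))) := by
      have : ∀ n, (inner ℝ (a n) y : ℝ) = φ (j (a n)) := fun n => by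
        rw [real_inner_comm]; exact h1 (a n)
      simp_rw [this]
      exact (φ.continuous.tendsto _).comp hja
    have h3 : L y = φ (v t) := tendsto_nhds_unique (hL y) h2
    calc φ (j w) = inner ℝ y w := (h1 w).symm
      _ = inner ℝ w y := real_inner_comm _ _
      _ = L y := hwz y
      _ = φ (v t) := h3
  -- norm bound
  have hwC : ‖w‖ ≤ C := by
    rcases eq_or_ne w 0 with h | h
    · simpa [h] using hC0
    · have h1 : (inner ℝ w w : ℝ) ≤ C * ‖w‖ := by
        rw [hwz w]
        exact (abs_le.mp (hLbound w)).2
      rw [real_inner_self_eq_norm_mul_norm] at h1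
      have hpos : 0 < ‖w‖ := norm_pos_iff.mpr h
      exact le_of_mul_le_mul_right (by linarith) hpos
  refine ⟨w, ⟨hjw, hwC, fun z => by rw [hwz z]; exact hL z⟩, ?_⟩
  rintro w' ⟨hjw', -, -⟩
  exact hj (hjw'.trans hjw.symm)
end

section
/- Let H be a real Hilbert space, E a real normed vector space, and j : H → E an injective continuous linear map. Let T > 0 and let u : [0,T] → H be a function such that sup_{t∈[0,T]} ‖u(t)‖_H ≤ C for some constant C, and such that t ↦ j(u(t)) is continuous from [0,T] to E. Then u is weakly continuous: for every sequence (t_n) in [0,T] converging to t ∈ [0,T], one has ⟨u(t_n), w⟩ → ⟨u(t), w⟩ for every w ∈ H. -/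
open Filter

/-- Let `j : H → E` be an injective continuous linear map from a real Hilbert space `H`
to a normed space `E`. If `u : [0,T] → H` is bounded by `C` in `H` and `j ∘ u` is
continuous from `[0,T]` to `E`, then `u` is weakly continuous: along any sequence
`t n → t` in `[0,T]`, `u (t n)` converges weakly to `u t` in `H`. -/
theorem weakly_continuous_of_bounded_of_image_continuous
    {H E : Type*}
    [NormedAddCommGroup H] [InnerProductSpace ℝ H] [CompleteSpace H]
    [NormedAddCommGroup E] [NormedSpace ℝ E]
    (j : H →L[ℝ] E) (hj : Function.Injective j)
    (T : ℝ) (hT : 0 < T)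
    (u : ℝ → H) (C : ℝ)
    (hbdd : ∀ t ∈ Set.Icc (0:ℝ) T, ‖u t‖ ≤ C)
    (hcont : ContinuousOn (fun t => j (u t)) (Set.Icc (0:ℝ) T)) :
    ∀ t ∈ Set.Icc (0:ℝ) T, ∀ tseq : ℕ → ℝ,
      (∀ n, tseq n ∈ Set.Icc (0:ℝ) T) → Tendsto tseq atTop (nhds t) →
      ∀ w : H, Tendsto (fun n => (inner ℝ (u (tseq n)) w : ℝ)) atTop
        (nhds (inner ℝ (u t) w)) := by
  intro t ht tseq htseq hlim w
  have hC : 0 ≤ C := le_trans (norm_nonneg _) (hbdd t ht)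
  -- j (u (tseq n)) → j (u t)
  have hjlim : Tendsto (fun n => j (u (tseq n))) atTop (nhds (j (u t))) := by
    have h1 : Tendsto tseq atTop (nhdsWithin t (Set.Icc (0:ℝ) T)) :=
      tendsto_nhdsWithin_of_tendsto_nhds_of_eventually_within tseq hlim
        (Eventually.of_forall htseq)
    exact (hcont t ht).tendsto.comp h1
  -- the "adjoint" map sending φ to the Riesz representative of φ ∘ j
  set A : (E →L[ℝ] ℝ) →ₗ[ℝ] H :=
    { toFun := fun φ => (InnerProductSpace.toDual ℝ H).symm (φ.comp j)
      map_add' := by intro φ ψ; simp [ContinuousLinearMap.add_comp]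
      map_smul' := by intro c φ; simp [ContinuousLinearMap.smul_comp] } with hA
  have hAapp : ∀ (φ : E →L[ℝ] ℝ) (x : H), (inner ℝ (A φ) x : ℝ) = φ (j x) := by
    intro φ x
    simp [hA, InnerProductSpace.toDual_symm_apply]
  set K : Submodule ℝ H := LinearMap.range A with hK
  -- K is dense
  have hdense : Dense (K : Set H) := by
    rw [Submodule.dense_iff_topologicalClosure_eq_top, Submodule.topologicalClosure_eq_top_iff]
    rw [Submodule.eq_bot_iff]
    intro q hq
    have hjq : j q = 0 := by
      apply NormedSpace.eq_zero_of_forall_dual_eq_zero ℝ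
      intro φ
      have : (inner ℝ (A φ) q : ℝ) = 0 :=
        (Submodule.mem_orthogonal K q).mp hq (A φ) ⟨φ, rfl⟩
      rw [hAapp] at this
      exact this
    have : j q = j 0 := by simpa using hjq
    exact hj this
  -- convergence on K
  have hconvK : ∀ v ∈ K, Tendsto (fun n => (inner ℝ v (u (tseq n) - u t) : ℝ)) atTop (nhds 0) := by
    rintro v ⟨φ, rfl⟩
    have : ∀ n, (inner ℝ (A φ) (u (tseq n) - u t) : ℝ) = φ (j (u (tseq n))) - φ (j (u t)) := by
      intro n; rw [hAapp]; simp
    simp only [this]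
    have := (φ.continuous.tendsto _).comp hjlim
    simpa using this.sub_const (φ (j (u t)))
  -- bound on ‖u (tseq n) - u t‖
  have hxbd : ∀ n, ‖u (tseq n) - u t‖ ≤ 2 * C := by
    intro n
    calc ‖u (tseq n) - u t‖ ≤ ‖u (tseq n)‖ + ‖u t‖ := norm_sub_le _ _
    _ ≤ C + C := add_le_add (hbdd _ (htseq n)) (hbdd _ ht)
    _ = 2 * C := by ring
  -- main epsilon argument
  have key : Tendsto (fun n => (inner ℝ w (u (tseq n) - u t) : ℝ)) atTop (nhds 0) := by
    rw [Metric.tendsto_atTop]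
    intro ε hε
    obtain ⟨v, hvK, hvw⟩ : ∃ v ∈ K, ‖w - v‖ < ε / (2 * (2 * C + 1)) := by
      have : (ε / (2 * (2 * C + 1))) > 0 := by positivity
      obtain ⟨v, hv, hvd⟩ := Metric.dense_iff.mp hdense w _ this
      exact ⟨v, hvd, by rwa [Metric.mem_ball, dist_comm, dist_eq_norm] at hv⟩
    obtain ⟨N, hN⟩ := Metric.tendsto_atTop.mp (hconvK v hvK) (ε / 2) (by positivity)
    refine ⟨N, fun n hn => ?_⟩
    have h1 := hN n hn
    rw [Real.dist_eq, sub_zero] at h1 ⊢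
    have h2 : (inner ℝ w (u (tseq n) - u t) : ℝ)
        = inner ℝ v (u (tseq n) - u t) + inner ℝ (w - v) (u (tseq n) - u t) := by
      rw [← inner_add_left]; congr 1; abel
    rw [h2]
    calc |(inner ℝ v (u (tseq n) - u t) : ℝ) + inner ℝ (w - v) (u (tseq n) - u t)|
        ≤ |(inner ℝ v (u (tseq n) - u t) : ℝ)| + |(inner ℝ (w - v) (u (tseq n) - u t) : ℝ)| :=
          abs_add_le _ _
      _ < ε / 2 + ε / 2 := by
          apply add_lt_add_of_lt_of_le h1
          calc |(inner ℝ (w - v) (u (tseq n) - u t) : ℝ)|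
              ≤ ‖w - v‖ * ‖u (tseq n) - u t‖ := abs_real_inner_le_norm _ _
            _ ≤ (ε / (2 * (2 * C + 1))) * (2 * C + 1) := by
                apply mul_le_mul hvw.le (le_trans (hxbd n) (by linarith)) (norm_nonneg _)
                  (by positivity)
            _ = ε / 2 := by field_simp
      _ = ε := by ring
  -- conclude
  have : Tendsto (fun n => (inner ℝ (u (tseq n) - u t) w : ℝ)) atTop (nhds 0) := by
    simpa [real_inner_comm] using key
  have h3 : ∀ n, (inner ℝ (u (tseq n)) w : ℝ) = inner ℝ (u (tseq n) - u t) w + inner ℝ (u t) w := by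
    intro n; rw [← inner_add_left]; congr 1; abel
  simp only [h3]
  simpa using this.add_const (inner ℝ (u t) w : ℝ)
end
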